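/- arXiv:0803.4361 — 5 statements merged into one kernel-verified Lean document; each statement's English description precedes it below -/
import Mathlib

section
/- Let A and T be bounded operators on a complex Banach space X. If A has T-stable spectrum, then T is quasinilpotent, i.e. r(T) = 0. -/
open Metric Finset Filter ENNReal NNReal

/-- Noncommutative binomial expansion of `(x + lam • y) ^ n` as a polynomial in `lam`,
with top coefficient `y ^ n`. -/
lemma exists_coeffs_expansion {𝔸 : Type*} [Ring 𝔸] [Algebra ℂ 𝔸] (x y : 𝔸) (n : ℕ) :
    ∃ c : ℕ → 𝔸, c n = y ^ n ∧ (∀ k, n < k → c k = 0) ∧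
      ∀ lam : ℂ, (x + lam • y) ^ n = ∑ k ∈ Finset.range (n + 1), lam ^ k • c k := by
  induction n with
  | zero =>
    refine ⟨fun k => if k = 0 then 1 else 0, by simp, fun k hk => if_neg (Nat.pos_iff_ne_zero.mp hk), fun lam => by simp⟩
  | succ n ih =>
    obtain ⟨c, hcn, hctop, hsum⟩ := ih
    refine ⟨fun k => c k * x + (if k = 0 then 0 else c (k - 1)) * y, ?_, ?_, ?_⟩
    · have h1 : c (n + 1) = 0 := hctop _ (Nat.lt_succ_self n)
      simp [h1, hcn, pow_succ]
    · intro k hk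
      have h1 : c k = 0 := hctop _ (by omega)
      have h2 : c (k - 1) = 0 := hctop _ (by omega)
      simp [h1, h2]
    · intro lam
      have key : (x + lam • y) ^ (n + 1)
          = (∑ k ∈ Finset.range (n + 1), lam ^ k • c k) * x
            + (∑ k ∈ Finset.range (n + 1), lam ^ k • c k) * (lam • y) := by
        rw [pow_succ, hsum lam, mul_add]
      rw [key]
      have e1 : (∑ k ∈ Finset.range (n + 1), lam ^ k • c k) * x
          = ∑ k ∈ Finset.range (n + 1), lam ^ k • (c k * x) := by
        rw [Finset.sum_mul]; exact Finset.sum_congr rfl fun k _ => smul_mul_assoc _ _ _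
      have e2 : (∑ k ∈ Finset.range (n + 1), lam ^ k • c k) * (lam • y)
          = ∑ k ∈ Finset.range (n + 1), lam ^ (k + 1) • (c k * y) := by
        rw [Finset.sum_mul]
        refine Finset.sum_congr rfl fun k _ => ?_
        rw [smul_mul_smul_comm, pow_succ]
      rw [e1, e2]
      have e3 : ∑ k ∈ Finset.range (n + 1 + 1),
          lam ^ k • (c k * x + (if k = 0 then 0 else c (k - 1)) * y)
          = (∑ k ∈ Finset.range (n + 1 + 1), lam ^ k • (c k * x))
            + ∑ k ∈ Finset.range (n + 1 + 1),
                lam ^ k • ((if k = 0 then 0 else c (k - 1)) * y) := by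
        rw [← Finset.sum_add_distrib]
        exact Finset.sum_congr rfl fun k _ => smul_add _ _ _
      rw [e3]
      congr 1
      · conv_rhs => rw [Finset.sum_range_succ]
        rw [hctop _ (Nat.lt_succ_self n)]
        simp
      · conv_rhs => rw [Finset.sum_range_succ']
        simp

/-- Cauchy estimate extracting the top coefficient `y ^ n` of `(x + lam • y) ^ n`
from a bound on the circle `‖lam‖ = s`. -/
lemma norm_pow_le_of_bound_on_sphere {𝔸 : Type*} [NormedRing 𝔸] [NormedAlgebra ℂ 𝔸]
    [CompleteSpace 𝔸] (x y : 𝔸) (n : ℕ) {s : ℝ≥0} (hs : 0 < s) {C : ℝ}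
    (hC : ∀ lam : ℂ, ‖lam‖ = s → ‖(x + lam • y) ^ n‖ ≤ C) :
    ‖y ^ n‖ ≤ C / (s : ℝ) ^ n := by
  obtain ⟨c, hcn, hctop, hsum⟩ := exists_coeffs_expansion x y n
  set g : ℂ → 𝔸 := fun lam => (x + lam • y) ^ n with hg
  have hgdiff : Differentiable ℂ g := fun z =>
    (((differentiable_id.smul_const y).const_add x) z).pow n
  set q : FormalMultilinearSeries ℂ ℂ 𝔸 :=
    fun k => ContinuousMultilinearMap.mkPiRing ℂ (Fin k) (if k ≤ n then c k else 0) with hqdef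
  have hz : ∀ (z : ℂ) (k : ℕ), (q k fun _ => z) = z ^ k • (if k ≤ n then c k else 0) := by
    intro z k
    simp [hqdef, ContinuousMultilinearMap.mkPiRing_apply]
  have hq : HasFPowerSeriesOnBall g q 0 ⊤ := by
    refine ⟨?_, zero_lt_top, ?_⟩
    · rw [q.radius_eq_top_of_forall_image_add_eq_zero (n + 1)
        (fun m => by
          have : ¬ m + (n + 1) ≤ n := by omega
          simp [hqdef, this, ContinuousMultilinearMap.mkPiRing_zero])]
    · intro z _
      have h0 : ∀ k ∉ Finset.range (n + 1), (q k fun _ => z) = 0 := by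
        intro k hk
        rw [hz z k, if_neg (by simpa [Nat.lt_succ_iff] using hk), smul_zero]
      have hsum' : (∑ k ∈ Finset.range (n + 1), (q k fun _ => z)) = g (0 + z) := by
        rw [zero_add, hg]
        dsimp only
        rw [hsum z]
        refine Finset.sum_congr rfl fun k hk => ?_
        rw [hz z k, if_pos (by simpa [Nat.lt_succ_iff] using hk)]
      exact hsum' ▸ hasSum_sum_of_ne_finset_zero h0
  have hcb : HasFPowerSeriesOnBall g (cauchyPowerSeries g 0 (s : ℝ)) 0 s :=
    hgdiff.differentiableOn.hasFPowerSeriesOnBall hs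
  have heq : q = cauchyPowerSeries g 0 (s : ℝ) :=
    hq.hasFPowerSeriesAt.eq_formalMultilinearSeries hcb.hasFPowerSeriesAt
  have hC0 : 0 ≤ C := le_trans (norm_nonneg _) (hC ((s : ℝ) : ℂ) (by
    rw [Complex.norm_real]; exact abs_of_nonneg s.coe_nonneg))
  have hint : (∫ θ : ℝ in (0)..2 * Real.pi, ‖g (circleMap 0 (s : ℝ) θ)‖)
      ≤ 2 * Real.pi * C := by
    have hle : ∀ θ ∈ Set.Icc (0 : ℝ) (2 * Real.pi), ‖g (circleMap 0 (s : ℝ) θ)‖ ≤ C := by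
      intro θ _
      apply hC
      rw [norm_circleMap_zero, abs_of_nonneg s.coe_nonneg]
    calc (∫ θ : ℝ in (0)..2 * Real.pi, ‖g (circleMap 0 (s : ℝ) θ)‖)
        ≤ ∫ _ : ℝ in (0)..2 * Real.pi, C :=
          intervalIntegral.integral_mono_on Real.two_pi_pos.le
            ((hgdiff.continuous.comp (continuous_circleMap 0 (s : ℝ))).norm.intervalIntegrable
              _ _)
            intervalIntegrable_const hle
      _ = 2 * Real.pi * C := by simp
  have hqn : ‖y ^ n‖ = ‖q n‖ := by
    rw [hqdef]
    dsimp only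
    rw [ContinuousMultilinearMap.norm_mkPiRing, if_pos le_rfl, hcn]
  rw [hqn, heq]
  calc ‖cauchyPowerSeries g 0 (s : ℝ) n‖
      ≤ ((2 * Real.pi)⁻¹ * ∫ θ : ℝ in (0)..2 * Real.pi, ‖g (circleMap 0 (s : ℝ) θ)‖)
          * |(s : ℝ)|⁻¹ ^ n := norm_cauchyPowerSeries_le g 0 (s : ℝ) n
    _ ≤ ((2 * Real.pi)⁻¹ * (2 * Real.pi * C)) * |(s : ℝ)|⁻¹ ^ n := by
        refine mul_le_mul_of_nonneg_right (mul_le_mul_of_nonneg_left hint (by positivity))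
          (by positivity)
    _ = C / (s : ℝ) ^ n := by
        rw [abs_of_nonneg s.coe_nonneg, ← mul_assoc,
          inv_mul_cancel₀ Real.two_pi_pos.ne', one_mul, inv_pow, div_eq_mul_inv]

/-- If `A` has `T`-stable spectrum (i.e. `r(A + λT) ≤ r(A)` for all `λ ∈ ℂ`),
then `T` is quasinilpotent. -/
theorem stable_spectrum_quasinilpotent
    {X : Type*} [NormedAddCommGroup X] [NormedSpace ℂ X] [CompleteSpace X]
    (A T : X →L[ℂ] X)
    (hstable : ∀ lam : ℂ, spectralRadius ℂ (A + lam • T) ≤ spectralRadius ℂ A) :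
    spectralRadius ℂ T = 0 := by
  -- the spectral radius of `A` is finite
  have hfin : spectralRadius ℂ A ≠ ⊤ := by
    refine ne_top_of_le_ne_top ?_ (spectrum.spectralRadius_le_pow_nnnorm_pow_one_div ℂ A 0)
    exact ENNReal.mul_ne_top (ENNReal.rpow_ne_top_of_nonneg (by norm_num) coe_ne_top)
      (ENNReal.rpow_ne_top_of_nonneg (by norm_num) coe_ne_top)
  set ρ : ℝ≥0 := (spectralRadius ℂ A).toNNReal + 1 with hρdef
  have hρpos : 0 < ρ := by positivity
  have hρA : spectralRadius ℂ A < (ρ : ℝ≥0∞) := by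
    rw [hρdef, ENNReal.coe_add, ENNReal.coe_one, ENNReal.coe_toNNReal hfin]
    exact ENNReal.lt_add_right hfin one_ne_zero
  -- reduce to showing the spectral radius of `T` is at most any positive `ε`
  suffices h : ∀ ε : ℝ≥0, 0 < ε → spectralRadius ℂ T ≤ ε by
    by_contra hne
    have hpos : 0 < spectralRadius ℂ T := pos_iff_ne_zero.mpr hne
    obtain ⟨ε, hε0, hεlt⟩ := ENNReal.lt_iff_exists_nnreal_btwn.mp hpos
    exact hεlt.not_ge (h ε (by exact_mod_cast hε0))
  intro ε hε
  set δ : ℝ≥0 := ε / 2 with hδdef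
  have hδpos : 0 < δ := by positivity
  set s : ℝ≥0 := ρ / δ with hsdef
  have hs : 0 < s := by positivity
  set t : ℝ≥0 := ρ⁻¹ with htdef
  have htpos : 0 < t := by positivity
  have htρ : (t : ℝ≥0∞) = ((ρ : ℝ≥0∞))⁻¹ := by
    rw [htdef, ENNReal.coe_inv hρpos.ne']
  have hspec : ∀ lam : ℂ, spectralRadius ℂ (A + lam • T) < (ρ : ℝ≥0∞) := fun lam =>
    (hstable lam).trans_lt hρA
  have htlt : ∀ lam : ℂ, (t : ℝ≥0∞) < (spectralRadius ℂ (A + lam • T))⁻¹ := by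
    intro lam
    rw [htρ]
    exact ENNReal.inv_lt_inv.mpr (hspec lam)
  have hunit : ∀ z lam : ℂ, ‖z‖₊ = t → IsUnit (1 - z • (A + lam • T)) := by
    intro z lam hzn
    apply spectrum.isUnit_one_sub_smul_of_lt_inv_radius
    rw [hzn]
    exact htlt lam
  -- uniform bound for the two-variable resolvent on a compact torus
  set F : ℂ × ℂ → (X →L[ℂ] X) := fun p => Ring.inverse (1 - p.1 • (A + p.2 • T)) with hFdef
  set K : Set (ℂ × ℂ) := (sphere (0 : ℂ) (t : ℝ)) ×ˢ (sphere (0 : ℂ) (s : ℝ)) with hKdef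
  have hKc : IsCompact K := (isCompact_sphere _ _).prod (isCompact_sphere _ _)
  have hFc : ContinuousOn F K := by
    intro p hp
    have hzn : ‖p.1‖₊ = t := by
      have := hp.1
      simp only [mem_sphere_iff_norm, sub_zero] at this
      ext
      simpa using this
    have hu := hunit p.1 p.2 hzn
    have hcont : ContinuousAt (fun p : ℂ × ℂ => 1 - p.1 • (A + p.2 • T)) p := by fun_prop
    have hinv : ContinuousAt Ring.inverse (1 - p.1 • (A + p.2 • T)) := by
      have := NormedRing.inverse_continuousAt hu.unit
      rwa [hu.unit_spec] at this
    exact (ContinuousAt.comp (g := Ring.inverse)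
      (f := fun q : ℂ × ℂ => 1 - q.1 • (A + q.2 • T)) hinv hcont).continuousWithinAt
  obtain ⟨C₀, hC₀⟩ := hKc.exists_bound_of_continuousOn hFc
  set C : ℝ := max C₀ 1 with hCdef
  have hC1 : (1 : ℝ) ≤ C := le_max_right _ _
  have hCpos : 0 < C := lt_of_lt_of_le one_pos hC1
  -- uniform bound on powers: `‖(A + lam • T) ^ n‖ ≤ C * ρ ^ n` for `‖lam‖ = s`
  have hpow : ∀ lam : ℂ, ‖lam‖ = (s : ℝ) → ∀ n : ℕ,
      ‖(A + lam • T) ^ n‖ ≤ C * (ρ : ℝ) ^ n := by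
    intro lam hlam n
    set x := A + lam • T with hxdef
    have hlamS : lam ∈ sphere (0 : ℂ) (s : ℝ) := by
      simp [mem_sphere_iff_norm, hlam]
    have h1 := spectrum.hasFPowerSeriesOnBall_inverse_one_sub_smul ℂ x
    have hdiff : DifferentiableOn ℂ (fun z : ℂ => Ring.inverse (1 - z • x))
        (closedBall 0 (t : ℝ)) :=
      spectrum.differentiableOn_inverse_one_sub_smul (htlt lam)
    have h3 := hdiff.hasFPowerSeriesOnBall htpos
    have h4 : (fun k => ContinuousMultilinearMap.mkPiRing ℂ (Fin k) (x ^ k))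
        = cauchyPowerSeries (fun z : ℂ => Ring.inverse (1 - z • x)) 0 (t : ℝ) :=
      h1.hasFPowerSeriesAt.eq_formalMultilinearSeries h3.hasFPowerSeriesAt
    have hcm : Continuous fun θ : ℝ => Ring.inverse (1 - (circleMap 0 (t : ℝ) θ) • x) := by
      have hmem : ∀ θ : ℝ, (circleMap 0 (t : ℝ) θ, lam) ∈ K := fun θ =>
        ⟨circleMap_mem_sphere 0 t.coe_nonneg θ, hlamS⟩
      have := hFc.comp_continuous
        (by fun_prop : Continuous fun θ : ℝ => ((circleMap 0 (t : ℝ) θ, lam) : ℂ × ℂ))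
        hmem
      simpa [hFdef, hxdef, Function.comp_def] using this
    have hbd : ∀ θ : ℝ, ‖Ring.inverse (1 - (circleMap 0 (t : ℝ) θ) • x)‖ ≤ C₀ := by
      intro θ
      have := hC₀ (circleMap 0 (t : ℝ) θ, lam)
        ⟨circleMap_mem_sphere 0 t.coe_nonneg θ, hlamS⟩
      simpa [hFdef, hxdef] using this
    have hint : (∫ θ : ℝ in (0)..2 * Real.pi,
        ‖Ring.inverse (1 - (circleMap 0 (t : ℝ) θ) • x)‖) ≤ 2 * Real.pi * C₀ := by
      calc (∫ θ : ℝ in (0)..2 * Real.pi, ‖Ring.inverse (1 - (circleMap 0 (t : ℝ) θ) • x)‖)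
          ≤ ∫ _ : ℝ in (0)..2 * Real.pi, C₀ :=
            intervalIntegral.integral_mono_on Real.two_pi_pos.le
              (hcm.norm.intervalIntegrable _ _) intervalIntegrable_const
              (fun θ _ => hbd θ)
        _ = 2 * Real.pi * C₀ := by simp
    have hxn : ‖x ^ n‖
        = ‖cauchyPowerSeries (fun z : ℂ => Ring.inverse (1 - z • x)) 0 (t : ℝ) n‖ := by
      rw [← h4, ContinuousMultilinearMap.norm_mkPiRing]
    rw [hxn]
    calc ‖cauchyPowerSeries (fun z : ℂ => Ring.inverse (1 - z • x)) 0 (t : ℝ) n‖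
        ≤ ((2 * Real.pi)⁻¹ * ∫ θ : ℝ in (0)..2 * Real.pi,
            ‖Ring.inverse (1 - (circleMap 0 (t : ℝ) θ) • x)‖) * |(t : ℝ)|⁻¹ ^ n :=
          norm_cauchyPowerSeries_le _ 0 (t : ℝ) n
      _ ≤ ((2 * Real.pi)⁻¹ * (2 * Real.pi * C₀)) * |(t : ℝ)|⁻¹ ^ n := by
          refine mul_le_mul_of_nonneg_right (mul_le_mul_of_nonneg_left hint (by positivity))
            (by positivity)
      _ = C₀ * |(t : ℝ)|⁻¹ ^ n := by
          rw [← mul_assoc, inv_mul_cancel₀ Real.two_pi_pos.ne', one_mul]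
      _ ≤ C * (ρ : ℝ) ^ n := by
          have habs : |(t : ℝ)|⁻¹ = (ρ : ℝ) := by
            rw [abs_of_nonneg t.coe_nonneg, htdef]
            push_cast
            rw [inv_inv]
          rw [habs]
          exact mul_le_mul_of_nonneg_right (le_max_left _ _) (by positivity)
  -- Cauchy estimate on the circle `‖lam‖ = s` extracts `T ^ n`
  have hTn : ∀ n : ℕ, ‖T ^ n‖ ≤ C * (δ : ℝ) ^ n := by
    intro n
    have hb := norm_pow_le_of_bound_on_sphere A T n hs (C := C * (ρ : ℝ) ^ n)
      (fun lam hl => hpow lam hl n)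
    refine hb.trans_eq ?_
    have hsr : (s : ℝ) = (ρ : ℝ) / (δ : ℝ) := by
      rw [hsdef]; push_cast; ring
    rw [hsr, div_pow, div_div_eq_mul_div, div_eq_iff (by positivity : (ρ : ℝ) ^ n ≠ 0)]
    ring
  -- conclude via the liminf characterization of the spectral radius

  refine le_trans (spectrum.spectralRadius_le_liminf_pow_nnnorm_pow_one_div ℂ T) ?_
  have hev : ∀ᶠ n : ℕ in atTop, (‖T ^ n‖₊ : ℝ≥0∞) ^ (1 / (n : ℝ)) ≤ (ε : ℝ≥0∞) := by
    have h2 := ENNReal.eventually_pow_one_div_le (x := ((C.toNNReal : ℝ≥0∞)))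
      coe_ne_top (by norm_num : (1 : ℝ≥0∞) < 2)
    filter_upwards [h2, eventually_ge_atTop 1] with n hn hn1
    have hnR : (0 : ℝ) < (n : ℝ) := by exact_mod_cast hn1
    have hTn' : (‖T ^ n‖₊ : ℝ≥0∞) ≤ (C.toNNReal : ℝ≥0∞) * ((δ : ℝ≥0∞)) ^ n := by
      rw [← ENNReal.coe_pow, ← ENNReal.coe_mul, ENNReal.coe_le_coe, ← NNReal.coe_le_coe]
      push_cast
      rw [Real.coe_toNNReal _ hCpos.le]
      simpa using hTn n
    calc (‖T ^ n‖₊ : ℝ≥0∞) ^ (1 / (n : ℝ))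
        ≤ ((C.toNNReal : ℝ≥0∞) * ((δ : ℝ≥0∞)) ^ n) ^ (1 / (n : ℝ)) :=
          ENNReal.rpow_le_rpow hTn' (by positivity)
      _ = (C.toNNReal : ℝ≥0∞) ^ (1 / (n : ℝ)) * (((δ : ℝ≥0∞)) ^ n) ^ (1 / (n : ℝ)) :=
          ENNReal.mul_rpow_of_nonneg _ _ (by positivity)
      _ = (C.toNNReal : ℝ≥0∞) ^ (1 / (n : ℝ)) * (δ : ℝ≥0∞) := by
          rw [← ENNReal.rpow_natCast ((δ : ℝ≥0∞)) n, ← ENNReal.rpow_mul, mul_one_div,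
            div_self hnR.ne', ENNReal.rpow_one]
      _ ≤ 2 * (δ : ℝ≥0∞) := by
          exact mul_le_mul_left hn _
      _ = (ε : ℝ≥0∞) := by
          rw [hδdef]
          rw [show ((2 : ℝ≥0∞)) = ((2 : ℝ≥0) : ℝ≥0∞) by norm_cast, ← ENNReal.coe_mul,
            ENNReal.coe_inj]
          rw [mul_comm]
          exact div_mul_cancel₀ ε two_ne_zero
  calc atTop.liminf (fun n : ℕ => (‖T ^ n‖₊ : ℝ≥0∞) ^ (1 / (n : ℝ)))
      ≤ atTop.liminf (fun _ : ℕ => (ε : ℝ≥0∞)) := Filter.liminf_le_liminf hev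
    _ = (ε : ℝ≥0∞) := Filter.liminf_const _
end

section
/- Let n ≥ 1 and let f : ℂ → Mₙ(ℂ) be an entire (holomorphic on all of ℂ) matrix-valued function. Suppose there exists λ₀ ∈ ℂ such that σ(f(λ)) = σ(f(λ₀)) for every λ ∈ ℂ. Then tr(f(λ)) = tr(f(λ₀)) for every λ ∈ ℂ. -/
open Polynomial Matrix

lemma root_mem_spectrum_aux {n : ℕ} (M : Matrix (Fin n) (Fin n) ℂ) (μ : ℂ)
    (h : (Matrix.charpoly M).IsRoot μ) : μ ∈ spectrum ℂ M := by
  rw [spectrum.mem_iff]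
  intro hunit
  have hdet : IsUnit (Matrix.det (algebraMap ℂ _ μ - M)) :=
    (Matrix.isUnit_iff_isUnit_det _).mp hunit
  have hEq : Matrix.det (algebraMap ℂ (Matrix (Fin n) (Fin n) ℂ) μ - M)
      = (Matrix.charpoly M).eval μ := by
    rw [Matrix.charpoly, ← Polynomial.coe_evalRingHom, RingHom.map_det]
    congr 1
    ext i j
    by_cases hij : i = j <;>
      simp [Matrix.charmatrix_apply, Matrix.map_apply, Matrix.algebraMap_matrix_apply,
        Matrix.diagonal_apply, hij]
  rw [hEq, show eval μ M.charpoly = 0 from h] at hdet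
  exact hdet.ne_zero rfl

lemma trace_mem_aux {n : ℕ} (M : Matrix (Fin n) (Fin n) ℂ) :
    Matrix.trace M ∈ (fun v : Fin n → ℂ => ∑ i, v i) ''
      (Set.pi Set.univ fun _ : Fin n => spectrum ℂ M) := by
  have hroots : (Matrix.charpoly M).roots.card = n := by
    rw [(Polynomial.splits_iff_card_roots).mp (IsAlgClosed.splits _),
      Matrix.charpoly_natDegree_eq_dim, Fintype.card_fin]
  have hlen : (Matrix.charpoly M).roots.toList.length = n := by
    rw [Multiset.length_toList, hroots]
  refine ⟨fun i => (Matrix.charpoly M).roots.toList.get (Fin.cast hlen.symm i), ?_, ?_⟩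
  · intro i _
    apply root_mem_spectrum_aux
    have : (Matrix.charpoly M).roots.toList.get (Fin.cast hlen.symm i) ∈
        (Matrix.charpoly M).roots := by
      rw [← Multiset.mem_toList]
      exact List.get_mem _ _
    exact Polynomial.isRoot_of_mem_roots this
  · rw [Matrix.trace_eq_sum_roots_charpoly, ← Multiset.sum_toList]
    have hofn : List.ofFn (fun i : Fin n =>
        (Matrix.charpoly M).roots.toList.get (Fin.cast hlen.symm i))
        = (Matrix.charpoly M).roots.toList := by
      apply List.ext_get (by simp [hlen])
      intro k h1 h2
      simp
    show ∑ i : Fin n, (Matrix.charpoly M).roots.toList.get (Fin.cast hlen.symm i)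
        = (Matrix.charpoly M).roots.toList.sum
    rw [← List.sum_ofFn, hofn]

/-- If `f : ℂ → Mₙ(ℂ)` is entire (each entry is an entire function) and the spectrum
of `f(λ)` is constant, then the trace of `f(λ)` is constant. -/
theorem entire_const_spectrum_const_trace
    (n : ℕ) (hn : 1 ≤ n) (f : ℂ → Matrix (Fin n) (Fin n) ℂ)
    (hf : ∀ i j : Fin n, Differentiable ℂ (fun lam : ℂ => f lam i j))
    (lam₀ : ℂ) (hspec : ∀ lam : ℂ, spectrum ℂ (f lam) = spectrum ℂ (f lam₀)) :
    ∀ lam : ℂ, Matrix.trace (f lam) = Matrix.trace (f lam₀) := by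
  intro lam
  set T : Set ℂ := (fun v : Fin n → ℂ => ∑ i, v i) ''
      (Set.pi Set.univ fun _ : Fin n => spectrum ℂ (f lam₀)) with hT
  have hTfin : T.Finite := by
    apply Set.Finite.image
    exact Set.Finite.pi fun _ => Matrix.finite_spectrum _
  haveI : Finite T := hTfin.to_subtype
  have hcont : Continuous fun z : ℂ => Matrix.trace (f z) := by
    have : Differentiable ℂ fun z : ℂ => ∑ i, f z i i :=
      Differentiable.fun_sum fun i _ => hf i i
    simpa [Matrix.trace] using this.continuous
  have hmaps : Set.MapsTo (fun z : ℂ => Matrix.trace (f z)) Set.univ T := by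
    intro z _
    have := trace_mem_aux (f z)
    rwa [hspec z] at this
  exact isPreconnected_univ.constant_of_mapsTo hTfin.isDiscrete hcont.continuousOn hmaps
    (Set.mem_univ lam) (Set.mem_univ lam₀)
end

section
/- Let A and B be n × n complex matrices such that A has B-stable spectrum, i.e. the spectral radius satisfies r(A + λB) ≤ r(A) for every λ ∈ ℂ. Then tr(AᵏB) = 0 and tr(ABᵏ) = 0 for every integer k ≥ 1. -/
open Polynomial Matrix Finset
open scoped NNReal ENNReal

namespace StableAux

variable {n : ℕ}

/-- coefficient matrix -/
noncomputable def cm (k : ℕ) (M : Matrix (Fin n) (Fin n) ℂ[X]) : Matrix (Fin n) (Fin n) ℂ :=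
  Matrix.of fun i j => (M i j).coeff k

lemma cm_mul (k : ℕ) (P Q : Matrix (Fin n) (Fin n) ℂ[X]) :
    cm k (P * Q) = ∑ i ∈ Finset.range (k + 1), cm i P * cm (k - i) Q := by
  ext a b
  simp only [cm, Matrix.of_apply, Matrix.mul_apply, Matrix.sum_apply, Polynomial.coeff_mul,
    Finset.Nat.sum_antidiagonal_eq_sum_range_succ_mk, Polynomial.finset_sum_coeff]
  rw [Finset.sum_comm]

noncomputable def Mp (A B : Matrix (Fin n) (Fin n) ℂ) : Matrix (Fin n) (Fin n) ℂ[X] :=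
  A.map C + (X : ℂ[X]) • B.map C

variable (A B : Matrix (Fin n) (Fin n) ℂ)

lemma cm_Mp_zero : cm 0 (Mp A B) = A := by
  ext i j; simp [cm, Mp]

lemma cm_Mp_one : cm 1 (Mp A B) = B := by
  ext i j; simp [cm, Mp, coeff_X_mul]

lemma cm_Mp_ge (k : ℕ) (hk : 2 ≤ k) : cm k (Mp A B) = 0 := by
  obtain ⟨k, rfl⟩ : ∃ m, k = m + 1 := ⟨k - 1, by omega⟩
  ext i j
  simp [cm, Mp, coeff_X_mul, Polynomial.coeff_C, (by omega : k + 1 ≠ 0)]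
  exact fun h => absurd h (by omega)

lemma cm_one : cm (n := n) 0 1 = 1 := by
  ext i j
  simp [cm, Matrix.one_apply, apply_ite (fun p : ℂ[X] => p.coeff 0)]

lemma cm_one_ge (k : ℕ) (hk : 1 ≤ k) : cm (n := n) k 1 = 0 := by
  ext i j
  simp [cm, Matrix.one_apply, apply_ite (fun p : ℂ[X] => p.coeff k), Polynomial.coeff_one,
    (by omega : k ≠ 0)]
  exact fun _ => by omega

lemma cm_mul_Mp_zero (P : Matrix (Fin n) (Fin n) ℂ[X]) :
    cm 0 (P * Mp A B) = cm 0 P * A := by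
  rw [cm_mul]
  simp [cm_Mp_zero]

lemma cm_mul_Mp_succ (k : ℕ) (P : Matrix (Fin n) (Fin n) ℂ[X]) :
    cm (k + 1) (P * Mp A B) = cm (k + 1) P * A + cm k P * B := by
  rw [cm_mul, Finset.sum_range_succ, Finset.sum_range_succ]
  rw [Finset.sum_eq_zero (fun i hi => by
    rw [cm_Mp_ge A B _ (by simp at hi; omega), Matrix.mul_zero])]
  simp [cm_Mp_zero, cm_Mp_one, add_comm]

lemma cm_pow_zero (m : ℕ) : cm 0 (Mp A B ^ m) = A ^ m := by
  induction m with
  | zero => simpa using cm_one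
  | succ m ih => rw [pow_succ, cm_mul_Mp_zero, ih, pow_succ]

lemma cm_pow_high (m : ℕ) : ∀ k, m < k → cm k (Mp A B ^ m) = 0 := by
  induction m with
  | zero =>
    intro k hk
    simpa using cm_one_ge k hk
  | succ m ih =>
    intro k hk
    obtain ⟨k, rfl⟩ : ∃ j, k = j + 1 := ⟨k - 1, by omega⟩
    rw [pow_succ, cm_mul_Mp_succ, ih _ (by omega), ih _ (by omega), Matrix.zero_mul,
      Matrix.zero_mul, add_zero]

lemma cm_pow_top (m : ℕ) : cm m (Mp A B ^ m) = B ^ m := by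
  induction m with
  | zero => simpa using cm_one
  | succ m ih =>
    rw [pow_succ, cm_mul_Mp_succ, ih, cm_pow_high A B m (m + 1) (by omega), Matrix.zero_mul,
      zero_add, pow_succ]

lemma cm_pow_one (m : ℕ) :
    cm 1 (Mp A B ^ (m + 1)) = ∑ i ∈ Finset.range (m + 1), A ^ i * B * A ^ (m - i) := by
  induction m with
  | zero => simp [pow_one, cm_Mp_one]
  | succ m ih =>
    have h1 : (∑ i ∈ Finset.range (m + 1), A ^ i * B * A ^ (m - i)) * A
        = ∑ i ∈ Finset.range (m + 1), A ^ i * B * A ^ (m + 1 - i) := by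
      rw [Finset.sum_mul]
      refine Finset.sum_congr rfl fun i hi => ?_
      simp only [Finset.mem_range] at hi
      have h2 : m - i + 1 = m + 1 - i := by omega
      rw [Matrix.mul_assoc, ← pow_succ, h2]
    rw [pow_succ, cm_mul_Mp_succ, ih, cm_pow_zero, h1, Finset.sum_range_succ _ (m + 1)]
    simp [add_comm]

lemma cm_pow_subtop (m : ℕ) :
    cm m (Mp A B ^ (m + 1)) = ∑ i ∈ Finset.range (m + 1), B ^ i * A * B ^ (m - i) := by
  induction m with
  | zero => simp [pow_one, cm_Mp_zero]
  | succ m ih =>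
    have h1 : (∑ i ∈ Finset.range (m + 1), B ^ i * A * B ^ (m - i)) * B
        = ∑ i ∈ Finset.range (m + 1), B ^ i * A * B ^ (m + 1 - i) := by
      rw [Finset.sum_mul]
      refine Finset.sum_congr rfl fun i hi => ?_
      simp only [Finset.mem_range] at hi
      have h2 : m - i + 1 = m + 1 - i := by omega
      rw [Matrix.mul_assoc, ← pow_succ, h2]
    rw [pow_succ, cm_mul_Mp_succ, ih, cm_pow_top, h1, Finset.sum_range_succ _ (m + 1)]
    simp [add_comm]

lemma trace_cm (k : ℕ) (M : Matrix (Fin n) (Fin n) ℂ[X]) :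
    (Matrix.trace M).coeff k = Matrix.trace (cm k M) := by
  simp [Matrix.trace, cm, Polynomial.finset_sum_coeff, Matrix.diag]

lemma eval_trace (lam : ℂ) (m : ℕ) :
    ((Mp A B ^ m).trace).eval lam = ((A + lam • B) ^ m).trace := by
  have h0 : ∀ N : Matrix (Fin n) (Fin n) ℂ[X],
      (Matrix.trace N).eval lam = Matrix.trace ((evalRingHom lam).mapMatrix N) := by
    intro N
    simp [Matrix.trace, Matrix.diag, eval_finset_sum]
  have hM : (Mp A B).map (eval lam) = A + lam • B := by
    ext i j
    simp [Mp, Matrix.add_apply, Matrix.smul_apply, smul_eq_mul]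
    ring
  rw [h0, map_pow, RingHom.mapMatrix_apply]
  rw [show ⇑(evalRingHom lam) = (eval lam : ℂ[X] → ℂ) from rfl, hM]

lemma trace_sum_one (m : ℕ) :
    Matrix.trace (∑ i ∈ Finset.range (m + 1), A ^ i * B * A ^ (m - i))
      = (m + 1 : ℕ) • Matrix.trace (A ^ m * B) := by
  rw [Matrix.trace_sum]
  have h1 : ∀ i ∈ Finset.range (m + 1),
      Matrix.trace (A ^ i * B * A ^ (m - i)) = Matrix.trace (A ^ m * B) := by
    intro i hi
    simp only [Finset.mem_range] at hi
    have h2 : m - i + i = m := by omega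
    rw [Matrix.trace_mul_comm, ← Matrix.mul_assoc, ← pow_add, h2]
  rw [Finset.sum_congr rfl h1, Finset.sum_const, Finset.card_range]

lemma trace_sum_subtop (m : ℕ) :
    Matrix.trace (∑ i ∈ Finset.range (m + 1), B ^ i * A * B ^ (m - i))
      = (m + 1 : ℕ) • Matrix.trace (A * B ^ m) := by
  rw [Matrix.trace_sum]
  have h1 : ∀ i ∈ Finset.range (m + 1),
      Matrix.trace (B ^ i * A * B ^ (m - i)) = Matrix.trace (A * B ^ m) := by
    intro i hi
    simp only [Finset.mem_range] at hi
    have h2 : m - i + i = m := by omega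
    rw [Matrix.trace_mul_comm, ← Matrix.mul_assoc, ← pow_add, h2, Matrix.trace_mul_comm]
  rw [Finset.sum_congr rfl h1, Finset.sum_const, Finset.card_range]

lemma mem_spectrum_of_isRoot {M : Matrix (Fin n) (Fin n) ℂ} {μ : ℂ}
    (h : M.charpoly.IsRoot μ) : μ ∈ spectrum ℂ M := by
  rw [spectrum.mem_iff, Matrix.isUnit_iff_isUnit_det]
  have key : (algebraMap ℂ (Matrix (Fin n) (Fin n) ℂ) μ - M).det = M.charpoly.eval μ := by
    have hdet := RingHom.map_det (evalRingHom μ) (charmatrix M)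
    rw [Matrix.charpoly, show Polynomial.eval μ (charmatrix M).det
      = evalRingHom μ (charmatrix M).det from rfl, hdet]
    congr 1
    ext i j
    by_cases hij : i = j
    · subst hij
      simp [charmatrix_apply_eq, Matrix.algebraMap_matrix_apply]
    · simp [charmatrix_apply_ne _ _ _ hij, Matrix.algebraMap_matrix_apply, hij]
  rw [key, h.eq_zero]
  exact fun hc => by simp at hc

end StableAux

open StableAux

/-- If the `n × n` matrix `A` has `B`-stable spectrum, then `tr(AᵏB) = tr(ABᵏ) = 0`
for every `k ≥ 1`. -/
theorem stable_spectrum_trace_zero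
    {n : ℕ} (A B : Matrix (Fin n) (Fin n) ℂ)
    (hstable : ∀ lam : ℂ, spectralRadius ℂ (A + lam • B) ≤ spectralRadius ℂ A) :
    ∀ k : ℕ, 1 ≤ k → Matrix.trace (A ^ k * B) = 0 ∧ Matrix.trace (A * B ^ k) = 0 := by
  intro k hk
  -- a uniform bound on the spectra
  obtain ⟨r, hr⟩ : ∃ r : ℝ≥0, ∀ μ ∈ spectrum ℂ A, ‖μ‖₊ ≤ r := by
    obtain ⟨r, hr⟩ := ((Matrix.finite_spectrum A).image fun μ => ‖μ‖₊).bddAbove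
    exact ⟨r, fun μ hμ => hr (Set.mem_image_of_mem _ hμ)⟩
  have hRA : spectralRadius ℂ A ≤ (r : ℝ≥0∞) := by
    show (⨆ μ ∈ spectrum ℂ A, (‖μ‖₊ : ℝ≥0∞)) ≤ (r : ℝ≥0∞)
    exact iSup₂_le fun μ hμ => by exact_mod_cast hr μ hμ
  have hspec : ∀ lam : ℂ, ∀ μ ∈ spectrum ℂ (A + lam • B), ‖μ‖₊ ≤ r := by
    intro lam μ hμ
    have h1 : (‖μ‖₊ : ℝ≥0∞) ≤ spectralRadius ℂ (A + lam • B) :=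
      le_iSup₂ (f := fun (μ : ℂ) (_ : μ ∈ spectrum ℂ (A + lam • B)) => (‖μ‖₊ : ℝ≥0∞)) μ hμ
    exact_mod_cast h1.trans ((hstable lam).trans hRA)
  set P : Polynomial ℂ := Matrix.trace (Mp A B ^ (k + 1)) with hPdef
  have hbd : ∀ lam : ℂ, ‖P.eval lam‖ ≤ (n : ℝ) * (r : ℝ) ^ (k + 1) := by
    intro lam
    rw [hPdef, eval_trace]
    set N := A + lam • B with hN
    rw [Matrix.trace_eq_sum_roots_charpoly]
    have hroot : ∀ z ∈ (N ^ (k + 1)).charpoly.roots, ‖z‖ ≤ (r : ℝ) ^ (k + 1) := by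
      intro z hz
      have hzr : (N ^ (k + 1)).charpoly.IsRoot z := (Polynomial.mem_roots'.1 hz).2
      have hmem := mem_spectrum_of_isRoot hzr
      rw [spectrum.map_pow_of_pos _ (Nat.succ_pos k)] at hmem
      obtain ⟨μ, hμ, rfl⟩ := hmem
      rw [norm_pow]
      exact pow_le_pow_left₀ (norm_nonneg μ) (by exact_mod_cast hspec lam μ hμ) _
    have h2 : ‖(N ^ (k + 1)).charpoly.roots.sum‖
        ≤ ((N ^ (k + 1)).charpoly.roots.map norm).sum := norm_multiset_sum_le _
    have h3 : ((N ^ (k + 1)).charpoly.roots.map norm).sum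
        ≤ (Multiset.card ((N ^ (k + 1)).charpoly.roots.map norm)) • ((r : ℝ) ^ (k + 1)) := by
      refine Multiset.sum_le_card_nsmul _ _ ?_
      intro x hx
      obtain ⟨z, hz, rfl⟩ := Multiset.mem_map.1 hx
      exact hroot z hz
    have hcard : Multiset.card ((N ^ (k + 1)).charpoly.roots.map norm) ≤ n := by
      rw [Multiset.card_map]
      calc Multiset.card (N ^ (k + 1)).charpoly.roots
          ≤ (N ^ (k + 1)).charpoly.natDegree := Polynomial.card_roots' _
        _ = n := by rw [Matrix.charpoly_natDegree_eq_dim, Fintype.card_fin]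
    refine h2.trans (h3.trans ?_)
    rw [nsmul_eq_mul]
    exact mul_le_mul_of_nonneg_right (by exact_mod_cast hcard)
      (pow_nonneg r.coe_nonneg _)
  have hdiff : Differentiable ℂ fun lam : ℂ => P.eval lam := P.differentiable
  have hb : Bornology.IsBounded (Set.range fun lam : ℂ => P.eval lam) := by
    rw [isBounded_iff_forall_norm_le]
    exact ⟨_, by rintro x ⟨lam, rfl⟩; exact hbd lam⟩
  have hPC : ∀ j : ℕ, 1 ≤ j → P.coeff j = 0 := by
    intro j hj
    have hP : P = Polynomial.C (P.eval 0) := Polynomial.funext fun z => by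
      rw [hdiff.apply_eq_apply_of_bounded hb z 0]; simp
    rw [hP, Polynomial.coeff_C, if_neg (by omega)]
  have hcast : ((k + 1 : ℕ) : ℂ) ≠ 0 := by exact_mod_cast Nat.succ_ne_zero k
  constructor
  · have h1 : Matrix.trace (cm 1 (Mp A B ^ (k + 1))) = 0 := by
      rw [← trace_cm]; exact hPC 1 le_rfl
    rw [cm_pow_one, trace_sum_one] at h1
    rw [nsmul_eq_mul] at h1
    exact (mul_eq_zero.1 h1).resolve_left hcast
  · have h1 : Matrix.trace (cm k (Mp A B ^ (k + 1))) = 0 := by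
      rw [← trace_cm]; exact hPC k hk
    rw [cm_pow_subtop, trace_sum_subtop] at h1
    rw [nsmul_eq_mul] at h1
    exact (mul_eq_zero.1 h1).resolve_left hcast
end

section
/- Let n ≥ 2 and let L ⊆ Mₙ(ℂ) be a Lie algebra of matrices, i.e. a linear subspace closed under the commutator [A,B] = AB − BA. If tr(FGH) = tr(FHG) for all F, G, H ∈ L, then L is reducible: there exists a linear subspace W of ℂⁿ with W ≠ {0} and W ≠ ℂⁿ such that F(W) ⊆ W for every F ∈ L. -/
open Module LinearMap Set

namespace LieTraceRed

attribute [local instance 100] LieRing.ofAssociativeRing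

/-- For an independent family of submodules, any finitely-supported decomposition of zero
has all components zero. -/
lemma finsupp_eq_zero_of_iSupIndep {ι N : Type*} [AddCommGroup N] [Module ℂ N]
    {p : ι → Submodule ℂ N} (h : iSupIndep p) {m : ι →₀ N}
    (hm : ∀ i, m i ∈ p i) (hsum : (m.sum fun _ v => v) = 0) (i : ι) : m i = 0 := by
  classical
  by_cases hi : i ∈ m.support
  · have h1 : m i + ∑ j ∈ m.support.erase i, m j = 0 := by
      rw [Finsupp.sum] at hsum
      rwa [Finset.add_sum_erase _ _ hi]
    have h2 : m i ∈ ⨆ j ≠ i, p j := by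
      rw [eq_neg_of_add_eq_zero_left h1]
      refine Submodule.neg_mem _ (Submodule.sum_mem _ fun j hj => ?_)
      have hji : j ≠ i := (Finset.mem_erase.mp hj).1
      exact Submodule.mem_iSup_of_mem j (Submodule.mem_iSup_of_mem hji (hm j))
    exact (Submodule.mem_bot ℂ).mp <| (h i).le_bot ⟨hm i, h2⟩
  · exact Finsupp.notMem_support_iff.mp hi

variable {V : Type*} [AddCommGroup V] [Module ℂ V] [FiniteDimensional ℂ V]

/-- Key (Cartan-type) lemma: any element of the derived subspace of a linear Lie algebra
satisfying the symmetric-trace condition is nilpotent. -/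
theorem key (L : Submodule ℂ (Module.End ℂ V))
    (hLie : ∀ A ∈ L, ∀ B ∈ L, A * B - B * A ∈ L)
    (htr : ∀ F ∈ L, ∀ G ∈ L, ∀ H ∈ L,
      trace ℂ V (F * G * H) = trace ℂ V (F * H * G))
    {x : Module.End ℂ V}
    (hx : x ∈ Submodule.span ℂ {m | ∃ A ∈ L, ∃ B ∈ L, A * B - B * A = m}) :
    IsNilpotent x := by
  classical
  set D : Submodule ℂ (Module.End ℂ V) :=
    Submodule.span ℂ {m | ∃ A ∈ L, ∃ B ∈ L, A * B - B * A = m} with hD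
  have hDL : D ≤ L := by
    rw [hD, Submodule.span_le]
    rintro _ ⟨A, hA, B, hB, rfl⟩
    exact hLie A hA B hB
  have hbr : ∀ F ∈ L, ∀ G ∈ L, F * G - G * F ∈ D :=
    fun F hF G hG => Submodule.subset_span ⟨F, hF, G, hG, rfl⟩
  have htrD : ∀ F ∈ L, ∀ d ∈ D, trace ℂ V (F * d) = 0 := by
    intro F hF d hd
    induction hd using Submodule.span_induction with
    | mem g hg =>
      obtain ⟨A, hA, B, hB, rfl⟩ := hg
      rw [mul_sub, map_sub, ← mul_assoc, ← mul_assoc, htr F hF A hA B hB, sub_self]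
    | zero => simp
    | add a b _ _ ha hb => rw [mul_add, map_add, ha, hb, add_zero]
    | smul c a _ ha => rw [mul_smul_comm, map_smul, ha, smul_zero]
  have hxL : x ∈ L := hDL hx
  -- generalized eigenspace decomposition of x on V
  set E : ℂ → Submodule ℂ V := fun μ => x.maxGenEigenspace μ with hE
  have hind : iSupIndep E := x.independent_maxGenEigenspace
  have htop : ⨆ μ, E μ = ⊤ := x.iSup_maxGenEigenspace_eq_top
  have internal : DirectSum.IsInternal E :=
    DirectSum.isInternal_submodule_of_iSupIndep_of_iSup_eq_top hind htop
  -- the conjugate-diagonal operator y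
  set y : Module.End ℂ V :=
    (DirectSum.toModule ℂ ℂ V (fun μ => (starRingEnd ℂ) μ • (E μ).subtype)) ∘ₗ
      (LinearEquiv.ofBijective (DirectSum.coeLinearMap E) internal).symm.toLinearMap with hydef
  have hy : ∀ (μ : ℂ), ∀ v ∈ E μ, y v = (starRingEnd ℂ) μ • v := by
    intro μ v hv
    have h1 : (LinearEquiv.ofBijective (DirectSum.coeLinearMap E) internal)
        (DirectSum.lof ℂ ℂ (fun μ => E μ) μ ⟨v, hv⟩) = v := by
      change DirectSum.coeLinearMap E (DirectSum.lof ℂ ℂ (fun μ => E μ) μ ⟨v, hv⟩) = v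
      rw [DirectSum.lof_eq_of, DirectSum.coeLinearMap_of]
    have h2 : (LinearEquiv.ofBijective (DirectSum.coeLinearMap E) internal).symm v
        = DirectSum.lof ℂ ℂ (fun μ => E μ) μ ⟨v, hv⟩ :=
      (LinearEquiv.symm_apply_eq _).mpr h1.symm
    rw [hydef]
    simp only [LinearMap.comp_apply, LinearEquiv.coe_toLinearMap, h2]
    rw [DirectSum.toModule_lof]
    rfl
  -- the adjoint action of x
  set adx : Module.End ℂ (Module.End ℂ V) := LieAlgebra.ad ℂ (Module.End ℂ V) x with hadx
  have hadx_apply : ∀ g : Module.End ℂ V, adx g = x * g - g * x := by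
    intro g; rw [hadx, LieAlgebra.ad_apply, Ring.lie_def]
  have htoEnd : (LieModule.toEnd ℂ (Module.End ℂ V) V) x = x := by
    rw [LieModule.toEnd_module_end]; rfl
  -- weight shift property
  have h_shift : ∀ (ν μ : ℂ) (g : Module.End ℂ V), g ∈ adx.maxGenEigenspace ν →
      ∀ v ∈ E μ, g v ∈ E (ν + μ) := by
    intro ν μ g hg v hv
    have h1 : v ∈ Module.End.maxGenEigenspace ((LieModule.toEnd ℂ (Module.End ℂ V) V) x) μ := by
      rw [htoEnd]; exact hv
    have h2 := LieModule.lie_mem_maxGenEigenspace_toEnd (R := ℂ) (L := Module.End ℂ V) (M := V)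
      (χ₁ := ν) (χ₂ := μ) (x := x) (y := g) (m := v) hg h1
    rw [htoEnd] at h2
    exact h2
  -- y acts as conj ν on the ν-generalized eigenspace of ad x
  have hcom : ∀ (ν : ℂ) (g : Module.End ℂ V), g ∈ adx.maxGenEigenspace ν →
      y * g - g * y = (starRingEnd ℂ) ν • g := by
    intro ν g hg
    have hloc : ⨆ μ, E μ ≤ LinearMap.eqLocus (y * g - g * y) ((starRingEnd ℂ) ν • g) := by
      refine iSup_le fun μ v hv => ?_
      have hgv : g v ∈ E (ν + μ) := h_shift ν μ g hg v hv
      show (y * g - g * y) v = ((starRingEnd ℂ) ν • g) v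
      simp only [LinearMap.sub_apply, Module.End.mul_apply, LinearMap.smul_apply]
      rw [hy _ _ hgv, hy μ v hv, map_smul, map_add, add_smul, add_sub_cancel_right]
    rw [htop] at hloc
    exact LinearMap.ext fun v => hloc (Submodule.mem_top (x := v))
  -- ad x preserves D
  have hDinv : ∀ g ∈ D, adx g ∈ D := by
    intro g hg
    rw [hadx_apply]
    exact hbr x hxL g (hDL hg)
  -- main step : ⁅y, F⁆ ∈ D for all F ∈ L
  have hyD : ∀ F ∈ L, y * F - F * y ∈ D := by
    intro F hF
    have hFtop : F ∈ ⨆ ν, adx.maxGenEigenspace ν := by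
      rw [adx.iSup_maxGenEigenspace_eq_top]; trivial
    obtain ⟨m, hm, hsum⟩ := (Submodule.mem_iSup_iff_exists_finsupp _ _).mp hFtop
    have hG : adx F ∈ D := by
      rw [hadx_apply]; exact hbr x hxL F hF
    have hDdec : D = ⨆ ν, D ⊓ adx.genEigenspace ν ⊤ :=
      Submodule.eq_iSup_inf_genEigenspace (⊤ : ℕ∞) hDinv adx.iSup_maxGenEigenspace_eq_top
    have hG' : adx F ∈ ⨆ ν, D ⊓ adx.genEigenspace ν ⊤ := hDdec ▸ hG
    obtain ⟨d, hd, hdsum⟩ := (Submodule.mem_iSup_iff_exists_finsupp _ _).mp hG'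
    -- components match
    have hmatch : ∀ ν, adx (m ν) = d ν := by
      have hq : ∀ ν, (Finsupp.mapRange ⇑adx (map_zero adx) m - d) ν ∈ adx.maxGenEigenspace ν := by
        intro ν
        refine Submodule.sub_mem _ ?_ ((hd ν).2)
        simp only [Finsupp.mapRange_apply]
        exact Module.End.mapsTo_maxGenEigenspace_of_comm (Commute.refl adx) ν (hm ν)
      have hqsum : ((Finsupp.mapRange ⇑adx (map_zero adx) m - d).sum fun _ v => v) = 0 := by
        rw [Finsupp.sum_sub_index (fun a b₁ b₂ => rfl)]
        have h1 : ((Finsupp.mapRange ⇑adx (map_zero adx) m).sum fun _ v => v)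
            = m.sum fun _ v => adx v :=
          Finsupp.sum_mapRange_index (fun _ => rfl)
        have h2 : (m.sum fun _ v => adx v) = adx (m.sum fun _ v => v) :=
          (map_finsuppSum adx m fun _ v => v).symm
        rw [h1, h2, hsum, hdsum, sub_self]
      intro ν
      have := finsupp_eq_zero_of_iSupIndep adx.independent_maxGenEigenspace hq hqsum ν
      simpa [sub_eq_zero] using this
    -- each nonzero-weight component of F lies in D
    have hmD : ∀ ν : ℂ, ν ≠ 0 → m ν ∈ D := by
      intro ν hν
      have hinj : ∀ w ∈ adx.maxGenEigenspace ν, adx w = 0 → w = 0 := by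
        intro w hw hw0
        have hw0' : w ∈ adx.maxGenEigenspace 0 := by
          rw [Module.End.mem_maxGenEigenspace]
          exact ⟨1, by simpa using hw0⟩
        have hdisj : Disjoint (adx.maxGenEigenspace ν) (adx.maxGenEigenspace 0) :=
          Module.End.disjoint_genEigenspace adx hν ⊤ ⊤
        exact (Submodule.mem_bot ℂ).mp (hdisj.le_bot ⟨hw, hw0'⟩)
      set S : Submodule ℂ (Module.End ℂ V) := D ⊓ adx.maxGenEigenspace ν with hS
      have hmapsTo : MapsTo adx S S := by
        rintro w ⟨hw1, hw2⟩
        exact ⟨hDinv w hw1,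
          Module.End.mapsTo_maxGenEigenspace_of_comm (Commute.refl adx) ν hw2⟩
      have hTinj : Function.Injective (adx.restrict hmapsTo) := by
        rw [← LinearMap.ker_eq_bot, eq_bot_iff]
        rintro ⟨w, hw⟩ hwker
        have h0 : adx w = 0 := by
          have := congrArg Subtype.val (LinearMap.mem_ker.mp hwker)
          exact this
        have hw0 : w = 0 := hinj w hw.2 h0
        rw [Submodule.mem_bot]
        exact Subtype.ext (by simpa using hw0)
      have hTsurj : Function.Surjective (adx.restrict hmapsTo) :=
        (LinearMap.injective_iff_surjective).mp hTinj
      have hdν : d ν ∈ S := ⟨(hd ν).1, (hd ν).2⟩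
      obtain ⟨⟨w, hw⟩, hww⟩ := hTsurj ⟨d ν, hdν⟩
      have hww' : adx w = d ν := by
        have := congrArg Subtype.val hww
        exact this
      have hmw : m ν = w := by
        have hsub : adx (m ν - w) = 0 := by
          rw [map_sub, hmatch ν, hww', sub_self]
        have hmem : m ν - w ∈ adx.maxGenEigenspace ν :=
          Submodule.sub_mem _ (hm ν) hw.2
        have := hinj _ hmem hsub
        rwa [sub_eq_zero] at this
      rw [hmw]; exact hw.1
    -- conclude
    have hyF : y * F - F * y = m.sum fun ν g => (starRingEnd ℂ) ν • g := by
      rw [← hsum, Finsupp.sum, Finsupp.sum, Finset.mul_sum, Finset.sum_mul,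
        ← Finset.sum_sub_distrib]
      exact Finset.sum_congr rfl fun ν _ => hcom ν (m ν) (hm ν)
    rw [hyF, Finsupp.sum]
    refine Submodule.sum_mem _ fun ν _ => ?_
    by_cases hν : ν = 0
    · simp [hν]
    · exact Submodule.smul_mem _ _ (hmD ν hν)
  -- tr (d * y) = 0 for all d ∈ D
  have htry : ∀ d ∈ D, trace ℂ V (d * y) = 0 := by
    intro d hd
    induction hd using Submodule.span_induction with
    | mem g hg =>
      obtain ⟨A, hA, B, hB, rfl⟩ := hg
      have h1 : (A * B - B * A) * y = A * (B * y - y * B) + ((A * y) * B - B * (A * y)) := by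
        noncomm_ring
      have h3 : A * (B * y - y * B) = -(A * (y * B - B * y)) := by noncomm_ring
      rw [h1, map_add, map_sub, LinearMap.trace_mul_comm ℂ (A * y) B, sub_self, add_zero,
        h3, map_neg, htrD A hA _ (hyD B hB), neg_zero]
    | zero => simp
    | add a b _ _ ha hb => rw [add_mul, map_add, ha, hb, add_zero]
    | smul c a _ ha => rw [smul_mul_assoc, map_smul, ha, smul_zero]
  have htrace0 : trace ℂ V (x * y) = 0 := htry x hx
  -- compute tr (x * y) as a sum over eigenvalues
  have hfin : {μ | E μ ≠ ⊥}.Finite := WellFoundedGT.finite_ne_bot_of_iSupIndep hind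
  have hxE : ∀ μ, MapsTo x (E μ) (E μ) := fun μ =>
    Module.End.mapsTo_maxGenEigenspace_of_comm (Commute.refl x) μ
  have hyE : ∀ μ, MapsTo y (E μ) (E μ) := fun μ v hv => by
    rw [hy μ v hv]; exact Submodule.smul_mem _ _ hv
  have hxyE : ∀ μ, MapsTo (x * y) (E μ) (E μ) := fun μ => (hxE μ).comp (hyE μ)
  have hsum := LinearMap.trace_eq_sum_trace_restrict' internal hfin hxyE
  have hterm : ∀ μ : ℂ, trace ℂ (E μ) ((x * y).restrict (hxyE μ))
      = (starRingEnd ℂ) μ * μ * (finrank ℂ (E μ) : ℂ) := by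
    intro μ
    have h1 : (x * y).restrict (hxyE μ) = (starRingEnd ℂ) μ • (x.restrict (hxE μ)) := by
      apply LinearMap.ext
      rintro ⟨v, hv⟩
      apply Subtype.ext
      change (x * y) v = (starRingEnd ℂ) μ • x v
      rw [Module.End.mul_apply, hy μ v hv, map_smul]
    have hsubμ : MapsTo (x - μ • (1 : Module.End ℂ V)) (E μ) (E μ) :=
      Module.End.mapsTo_genEigenspace_of_comm (Algebra.mul_sub_algebraMap_commutes x μ) μ ⊤
    have hnil : IsNilpotent ((x - μ • (1 : Module.End ℂ V)).restrict hsubμ) :=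
      Module.End.isNilpotent_restrict_genEigenspace_top x μ hsubμ
    have h2 : x.restrict (hxE μ) = ((x - μ • (1 : Module.End ℂ V)).restrict hsubμ)
        + μ • (1 : Module.End ℂ (E μ)) := by
      apply LinearMap.ext
      rintro ⟨v, hv⟩
      apply Subtype.ext
      change x v = (x - μ • (1 : Module.End ℂ V)) v + μ • v
      simp [LinearMap.restrict_apply, sub_smul]
    have h4 : trace ℂ (E μ) (x.restrict (hxE μ)) = μ * (finrank ℂ (E μ) : ℂ) := by
      rw [h2, map_add, map_smul, LinearMap.trace_one,
        (LinearMap.isNilpotent_trace_of_isNilpotent hnil).eq_zero, zero_add, smul_eq_mul]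
    rw [h1, map_smul, smul_eq_mul, h4, mul_assoc]
  -- all nonzero eigenvalues have trivial eigenspace
  have hzero : ∀ μ : ℂ, E μ ≠ ⊥ → μ = 0 := by
    intro μ hμ
    by_contra hμ0
    have hsum0 : ∑ ν ∈ hfin.toFinset, (starRingEnd ℂ) ν * ν * (finrank ℂ (E ν) : ℂ) = 0 := by
      rw [← Finset.sum_congr rfl fun ν _ => hterm ν, ← hsum, htrace0]
    have hreal : ∑ ν ∈ hfin.toFinset, (Complex.normSq ν * (finrank ℂ (E ν) : ℝ)) = 0 := by
      apply Complex.ofReal_injective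
      rw [Complex.ofReal_sum, Complex.ofReal_zero, ← hsum0]
      refine Finset.sum_congr rfl fun ν _ => ?_
      rw [Complex.ofReal_mul]
      rw [Complex.normSq_eq_conj_mul_self]
      push_cast
      ring
    have hmem : μ ∈ hfin.toFinset := by simpa using hμ
    have hterm0 : Complex.normSq μ * (finrank ℂ (E μ) : ℝ) = 0 := by
      have hnonneg : ∀ ν ∈ hfin.toFinset, 0 ≤ Complex.normSq ν * (finrank ℂ (E ν) : ℝ) :=
        fun ν _ => mul_nonneg (Complex.normSq_nonneg ν) (Nat.cast_nonneg _)
      exact (Finset.sum_eq_zero_iff_of_nonneg hnonneg).mp hreal μ hmem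
    have hr : (finrank ℂ (E μ) : ℝ) ≠ 0 := by
      have : Nontrivial (E μ) := Submodule.nontrivial_iff_ne_bot.mpr hμ
      have := finrank_pos (R := ℂ) (M := E μ)
      positivity
    have : Complex.normSq μ = 0 := by
      rcases mul_eq_zero.mp hterm0 with h | h
      · exact h
      · exact absurd h hr
    exact hμ0 (Complex.normSq_eq_zero.mp this)
  -- hence the 0 generalized eigenspace is everything
  have hE0 : E 0 = ⊤ := by
    refine le_antisymm le_top ?_
    rw [← htop]
    refine iSup_le fun μ => ?_
    by_cases hμ : E μ = ⊥
    · rw [hμ]; exact bot_le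
    · rw [hzero μ hμ]
  have hE0' : x.genEigenspace 0 (Module.End.maxUnifEigenspaceIndex x 0) = ⊤ := by
    rw [← Module.End.genEigenspace_top_eq_maxUnifEigenspaceIndex]
    exact hE0
  rw [Module.End.genEigenspace_nat] at hE0'
  refine ⟨Module.End.maxUnifEigenspaceIndex x 0, ?_⟩
  have : x - (0 : ℂ) • (1 : Module.End ℂ V) = x := by simp
  rw [this] at hE0'
  exact LinearMap.ker_eq_top.mp hE0'


/-- Main reduction theorem in endomorphism form. -/
theorem main_end (hV : 2 ≤ finrank ℂ V) (L : Submodule ℂ (Module.End ℂ V))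
    (hLie : ∀ A ∈ L, ∀ B ∈ L, A * B - B * A ∈ L)
    (htr : ∀ F ∈ L, ∀ G ∈ L, ∀ H ∈ L,
      trace ℂ V (F * G * H) = trace ℂ V (F * H * G)) :
    ∃ W : Submodule ℂ V, W ≠ ⊥ ∧ W ≠ ⊤ ∧ ∀ f ∈ L, ∀ v ∈ W, f v ∈ W := by
  classical
  haveI : Nontrivial V :=
    Module.nontrivial_of_finrank_pos (R := ℂ) (lt_of_lt_of_le (by norm_num) hV)
  set D : Submodule ℂ (Module.End ℂ V) :=
    Submodule.span ℂ {m | ∃ A ∈ L, ∃ B ∈ L, A * B - B * A = m} with hD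
  have hDL : D ≤ L := by
    rw [hD, Submodule.span_le]
    rintro _ ⟨A, hA, B, hB, rfl⟩
    exact hLie A hA B hB
  have hbr : ∀ F ∈ L, ∀ G ∈ L, F * G - G * F ∈ D :=
    fun F hF G hG => Submodule.subset_span ⟨F, hF, G, hG, rfl⟩
  by_cases hDbot : D = ⊥
  · -- abelian case
    have hcomm : ∀ A ∈ L, ∀ B ∈ L, A * B = B * A := by
      intro A hA B hB
      have h1 := hbr A hA B hB
      rw [hDbot, Submodule.mem_bot] at h1
      exact sub_eq_zero.mp h1
    by_cases hsc : ∀ F ∈ L, ∃ c : ℂ, F = c • (1 : Module.End ℂ V)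
    · -- all scalars: any line works
      obtain ⟨v, hv⟩ := exists_ne (0 : V)
      refine ⟨Submodule.span ℂ {v}, ?_, ?_, ?_⟩
      · simpa [Submodule.span_singleton_eq_bot] using hv
      · intro h
        have h1 : finrank ℂ (Submodule.span ℂ {v}) = 1 := finrank_span_singleton hv
        have h2 : (2:ℕ) ≤ finrank ℂ (Submodule.span ℂ {v}) := by
          rw [h]; rwa [finrank_top]
        omega
      · intro F hF w hw
        obtain ⟨c, rfl⟩ := hsc F hF
        have h3 : (c • (1 : Module.End ℂ V)) w = c • w := rfl
        rw [h3]
        exact Submodule.smul_mem _ _ hw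
    · -- a non-scalar element: take one of its eigenspaces
      push_neg at hsc
      obtain ⟨F, hF, hFns⟩ := hsc
      obtain ⟨μ, hμ⟩ := Module.End.exists_eigenvalue F
      refine ⟨F.eigenspace μ, hμ, ?_, ?_⟩
      · intro h
        refine hFns μ (LinearMap.ext fun w => ?_)
        have hw : w ∈ F.eigenspace μ := h ▸ Submodule.mem_top
        rw [Module.End.mem_eigenspace_iff] at hw
        simpa using hw
      · intro G hG w hw
        rw [Module.End.mem_eigenspace_iff] at hw ⊢
        have hc : F (G w) = G (F w) := by
          calc F (G w) = (F * G) w := rfl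
          _ = (G * F) w := by rw [hcomm F hF G hG]
          _ = G (F w) := rfl
        rw [hc, hw, map_smul]
  · -- non-abelian case: Engel's theorem applied to D
    have hnil : ∀ d ∈ D, IsNilpotent d := fun d hd => key L hLie htr hd
    have hDlie : ∀ a ∈ D, ∀ b ∈ D, ⁅a, b⁆ ∈ D := by
      intro a ha b hb
      rw [Ring.lie_def]
      exact hbr a (hDL ha) b (hDL hb)
    -- common kernel via Engel
    have hker : ∃ v : V, v ≠ 0 ∧ ∀ d ∈ D, d v = 0 := by
      let K : LieSubalgebra ℂ (Module.End ℂ V) :=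
        { D with lie_mem' := fun {a b} ha hb => hDlie a ha b hb }
      have h2 : ∀ d : K, LieModule.toEnd ℂ K V d = (d : Module.End ℂ V) := by
        intro d; ext v
        simp only [LieModule.toEnd_apply_apply, LieSubalgebra.coe_bracket_of_module,
          Module.End.lie_apply]
      have hnilK : ∀ d : K, IsNilpotent (LieModule.toEnd ℂ K V d) := by
        intro d; rw [h2]; exact hnil d d.2
      have : LieModule.IsNilpotent K V := (LieModule.isNilpotent_iff_forall' (R := ℂ)).mpr hnilK
      have hnt : Nontrivial (LieModule.maxTrivSubmodule ℂ K V) :=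
        LieModule.nontrivial_max_triv_of_isNilpotent ℂ K V
      obtain ⟨⟨v, hv⟩, hvne⟩ := exists_ne (0 : LieModule.maxTrivSubmodule ℂ K V)
      refine ⟨v, ?_, ?_⟩
      · intro h0
        exact hvne (Subtype.ext (by simpa using h0))
      · intro d hd
        have := (LieModule.mem_maxTrivSubmodule ℂ K V v).mp hv ⟨d, hd⟩
        simpa using this
    obtain ⟨v, hv0, hvD⟩ := hker
    set W : Submodule ℂ V :=
      { carrier := {w | ∀ d ∈ D, d w = 0}
        add_mem' := fun {a b} ha hb => by
          intro d hd
          simp [map_add, ha d hd, hb d hd]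
        zero_mem' := by intro d _; simp
        smul_mem' := fun c {w} hw => by
          intro d hd
          simp [map_smul, hw d hd] } with hW
    have hWmem : ∀ w : V, w ∈ W ↔ ∀ d ∈ D, d w = 0 := fun w => Iff.rfl
    refine ⟨W, ?_, ?_, ?_⟩
    · intro h
      apply hv0
      have : v ∈ W := (hWmem v).mpr hvD
      rwa [h, Submodule.mem_bot] at this
    · intro h
      obtain ⟨d₀, hd₀D, hd₀⟩ := (Submodule.ne_bot_iff D).mp hDbot
      have : ∃ w : V, d₀ w ≠ 0 := by
        by_contra hno
        push_neg at hno
        exact hd₀ (LinearMap.ext fun w => by simpa using hno w)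
      obtain ⟨w, hw⟩ := this
      exact hw (((hWmem w).mp (h ▸ Submodule.mem_top)) d₀ hd₀D)
    · intro F hF w hw d hd
      have h1 : (d * F - F * d) w = 0 := (hWmem w).mp hw _ (hbr d (hDL hd) F hF)
      have h2 : d (F w) = (d * F - F * d) w + F (d w) := by
        simp [LinearMap.sub_apply, Module.End.mul_apply]
      rw [h2, h1, (hWmem w).mp hw d hd, map_zero, zero_add]

end LieTraceRed

/-- A matrix Lie algebra with `tr(FGH) = tr(FHG)` for all its elements is reducible. -/
theorem lie_algebra_symmetric_trace_reducible
    {n : ℕ} (hn : 2 ≤ n) (L : Submodule ℂ (Matrix (Fin n) (Fin n) ℂ))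
    (hLie : ∀ A ∈ L, ∀ B ∈ L, A * B - B * A ∈ L)
    (htr : ∀ F ∈ L, ∀ G ∈ L, ∀ H ∈ L,
      Matrix.trace (F * G * H) = Matrix.trace (F * H * G)) :
    ∃ W : Submodule ℂ (Fin n → ℂ), W ≠ ⊥ ∧ W ≠ ⊤ ∧
      ∀ F ∈ L, ∀ x ∈ W, F.mulVec x ∈ W := by
  classical
  set e : Matrix (Fin n) (Fin n) ℂ ≃ₐ[ℂ] Module.End ℂ (Fin n → ℂ) :=
    Matrix.toLinAlgEquiv' with he
  set L' : Submodule ℂ (Module.End ℂ (Fin n → ℂ)) := L.map e.toLinearMap with hL'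
  have hmem : ∀ A ∈ L, e A ∈ L' := fun A hA => Submodule.mem_map_of_mem hA
  have hmem' : ∀ f ∈ L', ∃ A ∈ L, e A = f := by
    intro f hf
    obtain ⟨A, hA, rfl⟩ := Submodule.mem_map.mp hf
    exact ⟨A, hA, rfl⟩
  have htrace_e : ∀ A : Matrix (Fin n) (Fin n) ℂ,
      LinearMap.trace ℂ (Fin n → ℂ) (e A) = A.trace := by
    intro A
    have h1 : e A = Matrix.toLin' A := rfl
    rw [h1, LinearMap.trace_eq_matrix_trace ℂ (Pi.basisFun ℂ (Fin n)),
      LinearMap.toMatrix_eq_toMatrix', LinearMap.toMatrix'_toLin']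
  have hLie' : ∀ A ∈ L', ∀ B ∈ L', A * B - B * A ∈ L' := by
    intro A' hA' B' hB'
    obtain ⟨A, hA, rfl⟩ := hmem' A' hA'
    obtain ⟨B, hB, rfl⟩ := hmem' B' hB'
    have h1 : e A * e B - e B * e A = e (A * B - B * A) := by
      rw [map_sub, map_mul, map_mul]
    rw [h1]
    exact hmem _ (hLie A hA B hB)
  have htr' : ∀ F ∈ L', ∀ G ∈ L', ∀ H ∈ L',
      LinearMap.trace ℂ (Fin n → ℂ) (F * G * H) = LinearMap.trace ℂ (Fin n → ℂ) (F * H * G) := by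
    intro F' hF' G' hG' H' hH'
    obtain ⟨F, hF, rfl⟩ := hmem' F' hF'
    obtain ⟨G, hG, rfl⟩ := hmem' G' hG'
    obtain ⟨H, hH, rfl⟩ := hmem' H' hH'
    have h1 : e F * e G * e H = e (F * G * H) := by rw [map_mul, map_mul]
    have h2 : e F * e H * e G = e (F * H * G) := by rw [map_mul, map_mul]
    rw [h1, h2, htrace_e, htrace_e]
    exact htr F hF G hG H hH
  have hV : 2 ≤ Module.finrank ℂ (Fin n → ℂ) := by simpa using hn
  obtain ⟨W, hW1, hW2, hW3⟩ := LieTraceRed.main_end hV L' hLie' htr'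
  refine ⟨W, hW1, hW2, fun F hF x hx => ?_⟩
  have h1 := hW3 (e F) (hmem F hF) x hx
  have h2 : e F x = F.mulVec x := rfl
  rwa [h2] at h1
end

section
/- Let n ≥ 2 and let L ⊆ Mₙ(ℂ) be a Lie algebra of matrices, i.e. a linear subspace closed under the commutator [A,B] = AB − BA. If tr(F²) = 0 for every F ∈ L, then L is reducible: there exists a linear subspace W of ℂⁿ with W ≠ {0} and W ≠ ℂⁿ such that F(W) ⊆ W for every F ∈ L. -/
open Module LinearMap

variable {V : Type*} [AddCommGroup V] [Module ℂ V] [FiniteDimensional ℂ V]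

omit [FiniteDimensional ℂ V] in
lemma exists_smul_proj {ι : Type*} [DecidableEq ι] (N : ι → Submodule ℂ V)
    (h : DirectSum.IsInternal N)
    (c : ι → ℂ) : ∃ y : Module.End ℂ V, ∀ i, ∀ v ∈ N i, y v = c i • v := by
  classical
  refine ⟨(DirectSum.toModule ℂ ι V fun i => c i • (N i).subtype) ∘ₗ
    (LinearEquiv.ofBijective (DirectSum.coeLinearMap N) h).symm.toLinearMap, fun i v hv => ?_⟩
  have h1 : (LinearEquiv.ofBijective (DirectSum.coeLinearMap N) h).symm v
      = DirectSum.of (fun i => N i) i ⟨v, hv⟩ := by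
    apply (LinearEquiv.ofBijective (DirectSum.coeLinearMap N) h).injective
    simp [DirectSum.coeLinearMap_of, LinearEquiv.ofBijective_apply]
    exact (DirectSum.coeLinearMap_of N i ⟨v, hv⟩).symm
  have h2 := DirectSum.toModule_lof (R := ℂ) (ι := ι) (M := fun i => N i)
    (φ := fun i => c i • (N i).subtype) (i := i) (x := ⟨v, hv⟩)
  simp only [coe_comp, Function.comp_apply, LinearEquiv.coe_coe, h1]
  rw [← DirectSum.lof_eq_of ℂ, h2]
  simp

/-- The commutator map `u ↦ x*u - u*x` as a linear endomorphism of `End V`. -/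
noncomputable def adE (x : Module.End ℂ V) : Module.End ℂ (Module.End ℂ V) :=
  mulLeft ℂ x - mulRight ℂ x

omit [FiniteDimensional ℂ V] in
lemma adE_apply (x u : Module.End ℂ V) : adE x u = x * u - u * x := by
  simp [adE, mulLeft_apply, mulRight_apply]

omit [FiniteDimensional ℂ V] in
lemma mulLeft_smul_one (c : ℂ) :
    mulLeft ℂ (c • (1 : Module.End ℂ V)) = c • (1 : Module.End ℂ (Module.End ℂ V)) := by
  apply LinearMap.ext; intro f
  simp [mulLeft_apply, LinearMap.smul_apply]

omit [FiniteDimensional ℂ V] in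
lemma mulRight_smul_one (c : ℂ) :
    mulRight ℂ (c • (1 : Module.End ℂ V)) = c • (1 : Module.End ℂ (Module.End ℂ V)) := by
  apply LinearMap.ext; intro f
  simp [mulRight_apply, LinearMap.smul_apply]

omit [FiniteDimensional ℂ V] in
lemma mulLeft_sub' (a b : Module.End ℂ V) :
    mulLeft ℂ (a - b) = mulLeft ℂ a - mulLeft ℂ b := by
  apply LinearMap.ext; intro f; simp [mulLeft_apply, sub_mul]

omit [FiniteDimensional ℂ V] in
lemma mulRight_sub' (a b : Module.End ℂ V) :
    mulRight ℂ (a - b) = mulRight ℂ a - mulRight ℂ b := by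
  apply LinearMap.ext; intro f; simp [mulRight_apply, mul_sub]

/-- Generalized eigenvectors of `ad x` shift generalized eigenspaces of `x`. -/
lemma mapsTo_maxGenEigenspace_of_adE {x u : Module.End ℂ V} {l : ℂ}
    (hu : u ∈ (adE x).maxGenEigenspace l) {m : ℂ} {v : V}
    (hv : v ∈ x.maxGenEigenspace m) : u v ∈ x.maxGenEigenspace (m + l) := by
  rw [Module.End.mem_maxGenEigenspace] at hu hv ⊢
  obtain ⟨k₁, hk₁⟩ := hu
  obtain ⟨k₂, hk₂⟩ := hv
  set A : Module.End ℂ (Module.End ℂ V) := adE x - l • 1 with hA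
  set B : Module.End ℂ (Module.End ℂ V) := mulRight ℂ (x - m • 1) with hB
  have hAB : Commute A B := by
    rw [hA, hB, adE, mulRight_sub', mulRight_smul_one]
    rw [← adE]
    have cA_mr : Commute (adE x) (mulRight ℂ x) :=
      (commute_mulLeft_right x x).sub_left (Commute.refl _)
    have cA_1m : Commute (adE x) (m • (1 : Module.End ℂ (Module.End ℂ V))) :=
      (Commute.one_right _).smul_right m
    have c1 : Commute (adE x) (mulRight ℂ x - m • 1) := cA_mr.sub_right cA_1m
    have c2 : Commute (l • (1 : Module.End ℂ (Module.End ℂ V))) (mulRight ℂ x - m • 1) :=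
      (Commute.one_left _).smul_left l
    exact c1.sub_left c2
  have hkey : mulLeft ℂ (x - (m + l) • 1) = A + B := by
    rw [mulLeft_sub', mulLeft_smul_one, hA, hB, adE, mulRight_sub', mulRight_smul_one, add_smul]
    abel
  refine ⟨k₁ + k₂, ?_⟩
  have h1 : ((x - (m + l) • 1) ^ (k₁ + k₂)) (u v)
      = ((mulLeft ℂ (x - (m + l) • 1) ^ (k₁ + k₂)) u) v := by
    rw [LinearMap.pow_mulLeft, mulLeft_apply, Module.End.mul_apply]
  rw [h1, hkey, hAB.add_pow]
  rw [LinearMap.coe_sum, Finset.sum_apply, LinearMap.coe_sum, Finset.sum_apply]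
  apply Finset.sum_eq_zero
  intro i hi
  simp only [Finset.mem_range] at hi
  set j := k₁ + k₂ - i with hj
  set w : Module.End ℂ V := (((k₁ + k₂).choose i : ℕ) : Module.End ℂ (Module.End ℂ V)) u with hw
  have hswap : (A ^ i) ((B ^ j) w) = (B ^ j) ((A ^ i) w) := by
    have := LinearMap.ext_iff.1 (hAB.pow_pow i j).eq w
    simpa only [Module.End.mul_apply] using this
  rw [Module.End.mul_apply, Module.End.mul_apply, ← hw, hswap]
  have hwc : w = ((k₁ + k₂).choose i : ℂ) • u := by
    rw [hw]; simp [Module.End.natCast_apply, Nat.cast_smul_eq_nsmul]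
  rcases le_or_gt k₁ i with h | h
  · have hAi : (A ^ i) w = 0 := by
      have hpow : A ^ i = A ^ (i - k₁) * A ^ k₁ := by rw [← pow_add]; congr 1; omega
      rw [hwc, map_smul, hpow, Module.End.mul_apply, hk₁, map_zero, smul_zero]
    rw [hAi, map_zero]
    rfl
  · have hjk : j = (j - k₂) + k₂ := by omega
    rw [hB, LinearMap.pow_mulRight, mulRight_apply, Module.End.mul_apply, hjk, pow_add,
      Module.End.mul_apply, hk₂, map_zero]
    exact map_zero _

lemma key2_comm {x : Module.End ℂ V} {y : Module.End ℂ V}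
    (hy : ∀ μ : ℂ, ∀ v ∈ x.maxGenEigenspace μ, y v = (starRingEnd ℂ) μ • v)
    (hsup : ⨆ μ : ℂ, x.maxGenEigenspace μ = ⊤)
    {l : ℂ} {u : Module.End ℂ V} (hu : u ∈ (adE x).maxGenEigenspace l) :
    y * u - u * y = (starRingEnd ℂ) l • u := by
  apply LinearMap.ext
  intro v
  have hv : v ∈ ⨆ μ : ℂ, x.maxGenEigenspace μ := hsup ▸ Submodule.mem_top
  induction hv using Submodule.iSup_induction' with
  | mem μ w hw =>
    have huv : u w ∈ x.maxGenEigenspace (μ + l) := mapsTo_maxGenEigenspace_of_adE hu hw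
    simp only [LinearMap.sub_apply, Module.End.mul_apply, LinearMap.smul_apply]
    rw [hy _ _ huv, hy _ _ hw, map_smul, map_add]
    rw [add_smul]
    abel
  | zero => simp
  | add w₁ w₂ _ _ ih₁ ih₂ =>
    simp only [LinearMap.sub_apply, Module.End.mul_apply, LinearMap.smul_apply] at ih₁ ih₂ ⊢
    simp only [map_add, smul_add]
    rw [← ih₁, ← ih₂]
    abel


lemma isNilpotent_of_mem_derived (M' : Submodule ℂ (Module.End ℂ V))
    (hM : ∀ a ∈ M', ∀ b ∈ M', a * b - b * a ∈ M')
    (htr : ∀ a ∈ M', ∀ b ∈ M', trace ℂ V (a * b) = 0)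
    {x : Module.End ℂ V}
    (hx : x ∈ Submodule.span ℂ {m | ∃ a ∈ M', ∃ b ∈ M', m = a * b - b * a}) :
    IsNilpotent x := by
  classical
  have hDM : Submodule.span ℂ {m | ∃ a ∈ M', ∃ b ∈ M', m = a * b - b * a} ≤ M' := by
    rw [Submodule.span_le]
    rintro z ⟨a, ha, b, hb, rfl⟩
    exact hM a ha b hb
  have hxM : x ∈ M' := hDM hx
  set N : ℂ → Submodule ℂ V := x.maxGenEigenspace with hN
  have hsup : ⨆ μ : ℂ, N μ = ⊤ := Module.End.iSup_maxGenEigenspace_eq_top x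
  have hind := x.independent_maxGenEigenspace
  have hds : DirectSum.IsInternal N :=
    DirectSum.isInternal_submodule_of_iSupIndep_of_iSup_eq_top hind hsup
  obtain ⟨y, hy⟩ := exists_smul_proj N hds (fun μ => (starRingEnd ℂ) μ)
  -- `[y, ·]` preserves `M'`
  have hxad : ∀ u ∈ M', adE x u ∈ M' := by
    intro u hu; rw [adE_apply]; exact hM x hxM u hu
  have key3 : ∀ u ∈ M', y * u - u * y ∈ M' := by
    intro u hu
    set T' : Module.End ℂ M' := (adE x).restrict hxad with hT'
    have hsup' : ⨆ l : ℂ, T'.maxGenEigenspace l = ⊤ :=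
      Module.End.iSup_maxGenEigenspace_eq_top _
    have hmem : (⟨u, hu⟩ : M') ∈ ⨆ l : ℂ, T'.maxGenEigenspace l :=
      hsup' ▸ Submodule.mem_top
    have goal : ∀ w : M', (w ∈ ⨆ l : ℂ, T'.maxGenEigenspace l) →
        y * (w : Module.End ℂ V) - (w : Module.End ℂ V) * y ∈ M' := by
      intro w hw
      induction hw using Submodule.iSup_induction' with
      | mem l w hw =>
        have hw' : (w : Module.End ℂ V) ∈ (adE x).maxGenEigenspace l := by
          have heq := Module.End.genEigenspace_restrict (adE x) M' ⊤ l hxad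
          rw [hT'] at hw
          have hw2 : w ∈ Submodule.comap M'.subtype ((adE x).maxGenEigenspace l) := by
            rw [← heq]; exact hw
          exact hw2
        rw [key2_comm hy hsup hw']
        exact Submodule.smul_mem _ _ (Submodule.coe_mem w)
      | zero => simpa using Submodule.zero_mem M'
      | add w₁ w₂ _ _ ih₁ ih₂ =>
        have : y * ((w₁ + w₂ : M') : Module.End ℂ V) - ((w₁ + w₂ : M') : Module.End ℂ V) * y
            = (y * (w₁ : Module.End ℂ V) - (w₁ : Module.End ℂ V) * y)
              + (y * (w₂ : Module.End ℂ V) - (w₂ : Module.End ℂ V) * y) := by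
          push_cast
          noncomm_ring
        rw [this]
        exact Submodule.add_mem _ ih₁ ih₂
    exact goal ⟨u, hu⟩ hmem
  -- trace of `x * y` vanishes
  have htrxy : LinearMap.trace ℂ V (x * y) = 0 := by
    have hspan : ∀ z ∈ Submodule.span ℂ {m | ∃ a ∈ M', ∃ b ∈ M', m = a * b - b * a},
        LinearMap.trace ℂ V (z * y) = 0 := by
      intro z hz
      induction hz using Submodule.span_induction with
      | mem z hz =>
        obtain ⟨a, ha, b, hb, rfl⟩ := hz
        have h1 : (a * b - b * a) * y = a * (b * y) - b * (a * y) := by noncomm_ring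
        rw [h1, map_sub, LinearMap.trace_mul_comm ℂ a (b * y),
          LinearMap.trace_mul_comm ℂ b (a * y)]
        have h2 : b * y * a - a * y * b = 0 → True := fun _ => trivial
        have h3 : b * y * a = b * (y * a) := by noncomm_ring
        have h4 : a * y * b = b * (a * y) → True := fun _ => trivial
        rw [h3]
        have h5 : (b * y) * a = b * (y * a) := by noncomm_ring
        have hya : y * a - a * y ∈ M' := key3 a ha
        have h6 : LinearMap.trace ℂ V (b * (y * a)) - LinearMap.trace ℂ V ((a * y) * b) = 0 := by
          rw [LinearMap.trace_mul_comm ℂ (a * y) b]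
          have : b * (y * a) - b * (a * y) = b * (y * a - a * y) := by noncomm_ring
          rw [← map_sub, this]
          exact htr b hb _ hya
        exact h6
      | zero => simp
      | add z₁ z₂ _ _ ih₁ ih₂ => rw [add_mul, map_add, ih₁, ih₂, add_zero]
      | smul c z _ ih => rw [smul_mul_assoc, map_smul, ih, smul_zero]
    exact hspan x hx
  -- compute the trace as a sum over generalized eigenspaces
  have hmapsx : ∀ μ : ℂ, Set.MapsTo x (N μ) (N μ) := fun μ =>
    x.mapsTo_maxGenEigenspace_of_comm rfl μ
  have hmapsxy : ∀ μ : ℂ, Set.MapsTo (x * y) (N μ) (N μ) := by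
    intro μ v hv
    have : (x * y) v = x (y v) := rfl
    rw [this, hy μ v hv, map_smul]
    exact Submodule.smul_mem _ _ (hmapsx μ hv)
  have hfin : {μ : ℂ | N μ ≠ ⊥}.Finite :=
    WellFoundedGT.finite_ne_bot_of_iSupIndep hind
  have htr_sum := LinearMap.trace_eq_sum_trace_restrict' hds hfin hmapsxy
  have hterm : ∀ μ : ℂ, LinearMap.trace ℂ (N μ) ((x * y).restrict (hmapsxy μ))
      = (starRingEnd ℂ) μ * (μ * (Module.finrank ℂ (N μ) : ℂ)) := by
    intro μ
    have hres : (x * y).restrict (hmapsxy μ) = (starRingEnd ℂ) μ • x.restrict (hmapsx μ) := by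
      apply LinearMap.ext
      rintro ⟨v, hv⟩
      apply Subtype.ext
      have h0 : ((x * y).restrict (hmapsxy μ)) ⟨v, hv⟩ = (x * y) v := rfl
      rw [h0]
      have h1 : (x * y) v = x (y v) := rfl
      rw [h1, hy μ v hv, map_smul]
      rfl
    rw [hres, map_smul]
    have hnil : IsNilpotent (x.restrict (hmapsx μ) - μ • 1) := by
      obtain ⟨k, hk⟩ := Module.End.isNilpotent_restrict_maxGenEigenspace_sub_algebraMap x μ
      refine ⟨k, ?_⟩
      have heq : (x - algebraMap ℂ (Module.End ℂ V) μ).restrict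
          (Module.End.mapsTo_maxGenEigenspace_of_comm
            (Algebra.mul_sub_algebraMap_commutes x μ) μ) = x.restrict (hmapsx μ) - μ • 1 := by
        apply LinearMap.ext
        rintro ⟨v, hv⟩
        apply Subtype.ext
        simp [LinearMap.restrict_apply, Module.algebraMap_end_apply]
        rfl
      rw [← heq]
      exact hk
    have htrx : LinearMap.trace ℂ (N μ) (x.restrict (hmapsx μ))
        = μ * (Module.finrank ℂ (N μ) : ℂ) := by
      have hdecomp : x.restrict (hmapsx μ) = (x.restrict (hmapsx μ) - μ • 1) + μ • 1 := by abel
      rw [hdecomp, map_add, map_smul, LinearMap.trace_one]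
      have hz : LinearMap.trace ℂ (N μ) (x.restrict (hmapsx μ) - μ • 1) = 0 := by
        have := LinearMap.isNilpotent_trace_of_isNilpotent hnil
        exact this.eq_zero
      rw [hz, zero_add, smul_eq_mul]
    rw [htrx, smul_eq_mul]
  rw [htrxy] at htr_sum
  have hsum0 : ∑ μ ∈ hfin.toFinset,
      ((Complex.normSq μ * (Module.finrank ℂ (N μ) : ℝ) : ℝ) : ℂ) = 0 := by
    have hc : ∑ μ ∈ hfin.toFinset,
        ((Complex.normSq μ * (Module.finrank ℂ (N μ) : ℝ) : ℝ) : ℂ)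
        = ∑ μ ∈ hfin.toFinset, LinearMap.trace ℂ (N μ) ((x * y).restrict (hmapsxy μ)) := by
      apply Finset.sum_congr rfl
      intro μ _
      rw [hterm μ, ← mul_assoc, mul_comm ((starRingEnd ℂ) μ) μ, Complex.mul_conj]
      push_cast
      ring
    rw [hc, ← htr_sum]
  rw [← Complex.ofReal_sum] at hsum0
  rw [Complex.ofReal_eq_zero] at hsum0
  have hzero : ∀ μ ∈ hfin.toFinset, Complex.normSq μ * (Module.finrank ℂ (N μ) : ℝ) = 0 := by
    rw [← Finset.sum_eq_zero_iff_of_nonneg]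
    · exact hsum0
    · intro μ _
      exact mul_nonneg (Complex.normSq_nonneg μ) (Nat.cast_nonneg _)
  have hμ0 : ∀ μ : ℂ, μ ≠ 0 → N μ = ⊥ := by
    intro μ hμ
    by_contra hbot
    have hmem : μ ∈ hfin.toFinset := by simpa using hbot
    have := hzero μ hmem
    have hpos : 0 < Module.finrank ℂ (N μ) := by
      rw [Module.finrank_pos_iff]
      exact Submodule.nontrivial_iff_ne_bot.mpr hbot
    have : Complex.normSq μ = 0 := by
      rcases mul_eq_zero.1 this with h | h
      · exact h
      · exact absurd h (by exact_mod_cast hpos.ne')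
    exact hμ (Complex.normSq_eq_zero.mp this)
  have hN0 : N 0 = ⊤ := by
    rw [← hsup]
    apply le_antisymm (le_iSup N 0)
    apply iSup_le
    intro μ
    rcases eq_or_ne μ 0 with rfl | hμ
    · exact le_rfl
    · rw [hμ0 μ hμ]
      exact bot_le
  refine ⟨Module.finrank ℂ V, ?_⟩
  apply LinearMap.ext
  intro v
  have hv : v ∈ N 0 := hN0 ▸ Submodule.mem_top
  rw [hN] at hv
  rw [Module.End.maxGenEigenspace_eq_genEigenspace_finrank] at hv
  rw [Module.End.mem_genEigenspace_nat] at hv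
  simpa using hv

lemma exists_common_kernel [Nontrivial V] (D : Submodule ℂ (Module.End ℂ V))
    (hD : ∀ a ∈ D, ∀ b ∈ D, a * b - b * a ∈ D) (hnil : ∀ x ∈ D, IsNilpotent x) :
    ∃ v : V, v ≠ 0 ∧ ∀ x ∈ D, x v = 0 := by
  letI : LieRing (Module.End ℂ V) := LieRing.ofAssociativeRing
  have hlie : ∀ {a b : Module.End ℂ V}, a ∈ D.carrier → b ∈ D.carrier →
      ⁅a, b⁆ ∈ D.carrier := by
    intro a b ha hb
    rw [LieRing.of_associative_ring_bracket]
    exact hD a ha b hb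
  let 𝔻 : LieSubalgebra ℂ (Module.End ℂ V) := { D with lie_mem' := hlie }
  have hmem : ∀ z : Module.End ℂ V, z ∈ 𝔻 ↔ z ∈ D := fun z => Iff.rfl
  have hnil' : ∀ z : 𝔻, IsNilpotent (LieModule.toEnd ℂ 𝔻 V z) := by
    intro z
    have heq : LieModule.toEnd ℂ 𝔻 V z = (z : Module.End ℂ V) := by
      apply LinearMap.ext; intro m; rfl
    rw [heq]
    exact hnil z.1 z.2
  have hLM : LieModule.IsNilpotent 𝔻 V := (LieModule.isNilpotent_iff_forall' (R := ℂ)).2 hnil'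
  have := LieModule.nontrivial_max_triv_of_isNilpotent (R := ℂ) (L := 𝔻) (M := V)
  obtain ⟨⟨v, hv⟩, hne⟩ := exists_ne (0 : LieModule.maxTrivSubmodule ℂ 𝔻 V)
  rw [LieModule.mem_maxTrivSubmodule] at hv
  refine ⟨v, ?_, ?_⟩
  · intro h0
    apply hne
    apply Subtype.ext
    exact h0
  · intro x hx
    exact hv ⟨x, hx⟩

theorem main_end (hdim : 2 ≤ Module.finrank ℂ V)
    (M' : Submodule ℂ (Module.End ℂ V))
    (hLie : ∀ a ∈ M', ∀ b ∈ M', a * b - b * a ∈ M')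
    (htr2 : ∀ a ∈ M', ∀ b ∈ M', LinearMap.trace ℂ V (a * b) = 0) :
    ∃ W : Submodule ℂ V, W ≠ ⊥ ∧ W ≠ ⊤ ∧ ∀ f ∈ M', ∀ v ∈ W, f v ∈ W := by
  have : Nontrivial V := Module.nontrivial_of_finrank_pos (by omega : 0 < Module.finrank ℂ V)
  set D : Submodule ℂ (Module.End ℂ V) :=
    Submodule.span ℂ {m | ∃ a ∈ M', ∃ b ∈ M', m = a * b - b * a} with hDdef
  have hDM : D ≤ M' := by
    rw [hDdef, Submodule.span_le]
    rintro z ⟨a, ha, b, hb, rfl⟩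
    exact hLie a ha b hb
  by_cases hD : D = ⊥
  · -- abelian case
    have hcomm : ∀ a ∈ M', ∀ b ∈ M', a * b = b * a := by
      intro a ha b hb
      have : a * b - b * a ∈ D := Submodule.subset_span ⟨a, ha, b, hb, rfl⟩
      rw [hD, Submodule.mem_bot] at this
      linear_combination (norm := noncomm_ring) this
    by_cases hM0 : M' = ⊥
    · obtain ⟨v, hv⟩ := exists_ne (0 : V)
      refine ⟨Submodule.span ℂ {v}, ?_, ?_, ?_⟩
      · simpa using hv
      · intro htop
        have h1 : Module.finrank ℂ (Submodule.span ℂ {v}) = 1 := finrank_span_singleton hv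
        rw [htop] at h1
        rw [finrank_top] at h1
        omega
      · intro f hf w hw
        rw [hM0, Submodule.mem_bot] at hf
        rw [hf]
        simp
    · obtain ⟨A, hA, hA0⟩ := (Submodule.ne_bot_iff M').1 hM0
      obtain ⟨μ, hμ⟩ := Module.End.exists_eigenvalue A
      refine ⟨A.eigenspace μ, hμ, ?_, ?_⟩
      · intro htop
        have hA1 : A = μ • 1 := by
          apply LinearMap.ext
          intro w
          have hw : w ∈ A.eigenspace μ := htop ▸ Submodule.mem_top
          rw [Module.End.mem_eigenspace_iff] at hw
          simpa using hw
        have h2 := htr2 A hA A hA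
        rw [hA1] at h2
        have h3 : (μ • (1 : Module.End ℂ V)) * (μ • 1) = (μ * μ) • 1 := by
          rw [smul_mul_smul_comm, one_mul]
        rw [h3, map_smul, LinearMap.trace_one, smul_eq_mul] at h2
        have h4 : (Module.finrank ℂ V : ℂ) ≠ 0 := by
          simp only [ne_eq, Nat.cast_eq_zero]
          omega
        have h5 : μ = 0 := by
          have := mul_eq_zero.1 h2
          rcases this with h | h
          · exact mul_self_eq_zero.mp h
          · exact absurd h h4
        rw [h5, zero_smul] at hA1
        exact hA0 hA1
      · intro f hf v hv
        rw [Module.End.mem_eigenspace_iff] at hv ⊢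
        have h1 : A (f v) = f (A v) := by
          have := hcomm A hA f hf
          calc A (f v) = (A * f) v := rfl
            _ = (f * A) v := by rw [this]
            _ = f (A v) := rfl
        rw [h1, hv, map_smul]
  · -- non-abelian case: derived algebra is nonzero and acts nilpotently
    have hDbr : ∀ a ∈ D, ∀ b ∈ D, a * b - b * a ∈ D := fun a ha b hb =>
      Submodule.subset_span ⟨a, hDM ha, b, hDM hb, rfl⟩
    have hnil : ∀ x ∈ D, IsNilpotent x := fun x hx =>
      isNilpotent_of_mem_derived M' hLie htr2 hx
    obtain ⟨v, hv0, hv⟩ := exists_common_kernel D hDbr hnil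
    obtain ⟨z, hz, hz0⟩ := (Submodule.ne_bot_iff D).1 hD
    refine ⟨⨅ x : D, LinearMap.ker (x : Module.End ℂ V), ?_, ?_, ?_⟩
    · intro hbot
      apply hv0
      rw [← Submodule.mem_bot (R := ℂ), ← hbot]
      rw [Submodule.mem_iInf]
      intro x
      rw [LinearMap.mem_ker]
      exact hv x.1 x.2
    · intro htop
      apply hz0
      apply LinearMap.ext
      intro w
      have hw : w ∈ ⨅ x : D, LinearMap.ker (x : Module.End ℂ V) := htop ▸ Submodule.mem_top
      rw [Submodule.mem_iInf] at hw
      have := hw ⟨z, hz⟩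
      rw [LinearMap.mem_ker] at this
      simpa using this
    · intro f hf w hw
      rw [Submodule.mem_iInf] at hw ⊢
      rintro ⟨x, hx⟩
      rw [LinearMap.mem_ker]
      have hbr : x * f - f * x ∈ D := Submodule.subset_span ⟨x, hDM hx, f, hf, rfl⟩
      have h1 : x (f w) = f (x w) + (x * f - f * x) w := by
        simp only [LinearMap.sub_apply, Module.End.mul_apply]
        abel
      have h2 : x w = 0 := by
        have := hw ⟨x, hx⟩
        rwa [LinearMap.mem_ker] at this
      have h3 : (x * f - f * x) w = 0 := by
        have := hw ⟨_, hbr⟩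
        rwa [LinearMap.mem_ker] at this
      rw [h1, h2, map_zero, h3, add_zero]

/-- A matrix Lie algebra with `tr(F²) = 0` for every element `F` is reducible. -/
theorem lie_algebra_trace_square_zero_reducible
    {n : ℕ} (hn : 2 ≤ n) (L : Submodule ℂ (Matrix (Fin n) (Fin n) ℂ))
    (hLie : ∀ A ∈ L, ∀ B ∈ L, A * B - B * A ∈ L)
    (htr : ∀ F ∈ L, Matrix.trace (F ^ 2) = 0) :
    ∃ W : Submodule ℂ (Fin n → ℂ), W ≠ ⊥ ∧ W ≠ ⊤ ∧
      ∀ F ∈ L, ∀ x ∈ W, F.mulVec x ∈ W := by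
  -- polarize the trace condition
  have htr2 : ∀ A ∈ L, ∀ B ∈ L, Matrix.trace (A * B) = 0 := by
    intro A hA B hB
    have h1 := htr (A + B) (Submodule.add_mem L hA hB)
    have h2 := htr A hA
    have h3 := htr B hB
    have hexp : (A + B) ^ 2 = A ^ 2 + (A * B + B * A) + B ^ 2 := by
      rw [pow_two, pow_two, pow_two]
      noncomm_ring
    rw [hexp, Matrix.trace_add, Matrix.trace_add, Matrix.trace_add, h2, h3,
      Matrix.trace_mul_comm B A] at h1
    have : (2 : ℂ) * Matrix.trace (A * B) = 0 := by linear_combination h1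
    have h2ne : (2 : ℂ) ≠ 0 := by norm_num
    exact (mul_eq_zero.1 this).resolve_left h2ne
  -- move to the endomorphism picture
  let φ : Matrix (Fin n) (Fin n) ℂ ≃ₐ[ℂ] Module.End ℂ (Fin n → ℂ) := Matrix.toLinAlgEquiv'
  set M' : Submodule ℂ (Module.End ℂ (Fin n → ℂ)) := L.map φ.toLinearMap with hM'def
  have hmem : ∀ f, f ∈ M' ↔ ∃ A ∈ L, φ A = f := by
    intro f
    simp [hM'def, Submodule.mem_map]
    exact ⟨fun h => ⟨_, h, φ.apply_symm_apply f⟩, by rintro ⟨A, hA, rfl⟩; simpa using hA⟩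
  have htrφ : ∀ A : Matrix (Fin n) (Fin n) ℂ,
      LinearMap.trace ℂ (Fin n → ℂ) (φ A) = Matrix.trace A := by
    intro A
    rw [LinearMap.trace_eq_matrix_trace ℂ (Pi.basisFun ℂ (Fin n))]
    congr 1
    rw [LinearMap.toMatrix_eq_toMatrix']
    exact LinearMap.toMatrix'_toLin' A
  have hLie' : ∀ a ∈ M', ∀ b ∈ M', a * b - b * a ∈ M' := by
    intro a ha b hb
    obtain ⟨A, hA, rfl⟩ := (hmem a).1 ha
    obtain ⟨B, hB, rfl⟩ := (hmem b).1 hb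
    refine (hmem _).2 ⟨A * B - B * A, hLie A hA B hB, ?_⟩
    rw [map_sub, map_mul, map_mul]
  have htr2' : ∀ a ∈ M', ∀ b ∈ M', LinearMap.trace ℂ (Fin n → ℂ) (a * b) = 0 := by
    intro a ha b hb
    obtain ⟨A, hA, rfl⟩ := (hmem a).1 ha
    obtain ⟨B, hB, rfl⟩ := (hmem b).1 hb
    rw [← map_mul, htrφ, htr2 A hA B hB]
  have hdim : 2 ≤ Module.finrank ℂ (Fin n → ℂ) := by
    rw [Module.finrank_fin_fun]
    exact hn
  obtain ⟨W, hW1, hW2, hW3⟩ := main_end hdim M' hLie' htr2'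
  refine ⟨W, hW1, hW2, ?_⟩
  intro F hF x hx
  have h1 : F.mulVec x = (φ F) x := (Matrix.toLin'_apply F x).symm
  rw [h1]
  exact hW3 (φ F) ((hmem _).2 ⟨F, hF, rfl⟩) x hx
end
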